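/- arXiv:1605.03708 — 2 statements merged into one kernel-verified Lean document; each statement's English description precedes it below -/
import Mathlib

section
/- Let K be a compact Hausdorff space of weight κ such that hL(K)⁺ < κ. Then there exist sequences (F_γ)_{γ<κ} of subsets of C(K), (f_γ)_{γ<κ} of elements of C(K), and (x_γ, y_γ)_{γ<κ} of pairs of points of K such that: (a) |F_γ| < κ and F_γ ⊆ F_{γ'} for all γ ≤ γ' < κ; (b) F_λ = ⋃_{γ<λ} F_γ for every limit ordinal λ < κ; (c) f_γ ∈ F_{γ+1}, f_γ(x_γ) = 0 and f_γ(y_γ) = 1 for every γ < κ; (d) f(x_γ) = f(y_γ) for every f ∈ F_γ; (e) whenever f, g ∈ F_γ and p, q ∈ ℚ satisfy {x : f(x) ≤ p} ∩ {x : g(x) ≥ q} = ∅, there is h₁ ∈ F_γ with h₁ ≡ 0 on {x : f(x) ≤ p} and h₁ ≡ 1 on {x : g(x) ≥ q}; and for every neighborhood V of x_γ and every neighborhood W of y_γ there are h₂, h₃ ∈ F_{γ+1} with x_γ ∈ {x : h₂(x) < 1} ⊆ V and y_γ ∈ {x : h₃(x) > 0} ⊆ W. -/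
open Cardinal

/-- The weight of a topological space: the least cardinality of a base for the topology. -/
noncomputable def weight (K : Type) [TopologicalSpace K] : Cardinal :=
  sInf {c : Cardinal | ∃ B : Set (Set K), TopologicalSpace.IsTopologicalBasis B ∧ c = #B}

/-- The Lindelöf degree of a topological space: the least infinite cardinal `θ` such that
every open cover has a subcover of cardinality at most `θ`. -/
noncomputable def lindelofDeg (X : Type) [TopologicalSpace X] : Cardinal :=
  sInf {θ : Cardinal | Cardinal.aleph0 ≤ θ ∧
    ∀ U : Set (Set X), (∀ u ∈ U, IsOpen u) → ⋃₀ U = Set.univ →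
      ∃ V ⊆ U, ⋃₀ V = Set.univ ∧ #V ≤ θ}

/-- The hereditary Lindelöf degree: the supremum of the Lindelöf degrees of all subspaces. -/
noncomputable def hL (K : Type) [TopologicalSpace K] : Cardinal :=
  ⨆ Y : Set K, lindelofDeg Y

section Aux
open Set TopologicalSpace

lemma lindelofDeg_spec (X : Type) [TopologicalSpace X] :
    ℵ₀ ≤ lindelofDeg X ∧ ∀ U : Set (Set X), (∀ u ∈ U, IsOpen u) → ⋃₀ U = Set.univ →
      ∃ V ⊆ U, ⋃₀ V = Set.univ ∧ #V ≤ lindelofDeg X := by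
  have hne : Set.Nonempty {θ : Cardinal | Cardinal.aleph0 ≤ θ ∧
      ∀ U : Set (Set X), (∀ u ∈ U, IsOpen u) → ⋃₀ U = Set.univ →
        ∃ V ⊆ U, ⋃₀ V = Set.univ ∧ #V ≤ θ} := by
    refine ⟨ℵ₀ + #(Set X), le_self_add, fun U hU hUc => ⟨U, Set.Subset.rfl, hUc, ?_⟩⟩
    exact le_trans (Cardinal.mk_set_le U) le_add_self
  exact csInf_mem hne

lemma lindelofDeg_le_hL {K : Type} [TopologicalSpace K] (Y : Set K) :
    lindelofDeg Y ≤ hL K :=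
  le_ciSup (Cardinal.bddAbove_range _) Y

lemma aleph0_le_hL (K : Type) [TopologicalSpace K] : ℵ₀ ≤ hL K :=
  le_trans (lindelofDeg_spec (univ : Set K)).1 (lindelofDeg_le_hL _)

lemma mk_finset_le (α : Type) : #(Finset α) ≤ max #α ℵ₀ := by
  obtain h | h := finite_or_infinite α
  · haveI := Fintype.ofFinite α
    exact le_max_of_le_right (lt_aleph0_of_finite (Finset α)).le
  · exact le_max_of_le_left (mk_finset_of_infinite α).le

end Aux

section FactB
open Set TopologicalSpace

variable {K : Type} [TopologicalSpace K] [CompactSpace K] [T2Space K]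

lemma factB (x : K) :
    ∃ H : Set C(K, ℝ), #H ≤ hL K ∧
      ∀ V ∈ nhds x, ∃ h ∈ H, h x < 1 ∧ {z : K | h z < 1} ⊆ V := by
  classical
  set Y : Set K := {x}ᶜ with hY
  have sep : ∀ y : K, ∃ UV : Set K × Set K,
      y ≠ x → IsOpen UV.1 ∧ IsOpen UV.2 ∧ y ∈ UV.1 ∧ x ∈ UV.2 ∧ Disjoint UV.1 UV.2 := by
    intro y
    by_cases h : y ≠ x
    · obtain ⟨u, v, hu, hv, hyu, hxv, huv⟩ := t2_separation h
      exact ⟨(u, v), fun _ => ⟨hu, hv, hyu, hxv, huv⟩⟩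
    · exact ⟨(∅, ∅), fun h' => absurd h' h⟩
  choose UV hUV using sep
  -- the open cover of Y
  set 𝒰 : Set (Set Y) := Set.range (fun y : Y => (Subtype.val ⁻¹' (UV y).1 : Set Y)) with h𝒰
  have h𝒰open : ∀ u ∈ 𝒰, IsOpen u := by
    rintro u ⟨y, rfl⟩
    exact (hUV y y.2).1.preimage continuous_subtype_val
  have h𝒰cov : ⋃₀ 𝒰 = (univ : Set Y) := by
    apply eq_univ_iff_forall.mpr
    rintro y
    exact ⟨Subtype.val ⁻¹' (UV y).1, ⟨y, rfl⟩, (hUV y y.2).2.2.1⟩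
  obtain ⟨𝒱, h𝒱sub, h𝒱cov, h𝒱card⟩ := (lindelofDeg_spec Y).2 𝒰 h𝒰open h𝒰cov
  have hc : ∀ v : 𝒱, ∃ y : Y, (Subtype.val ⁻¹' (UV y).1 : Set Y) = v := by
    rintro ⟨v, hv⟩
    exact h𝒱sub hv
  choose c hcspec using hc
  have hcov : ∀ z : K, z ≠ x → ∃ v : 𝒱, z ∈ (UV (c v)).1 := by
    intro z hz
    have hzY : (⟨z, hz⟩ : Y) ∈ ⋃₀ 𝒱 := h𝒱cov ▸ mem_univ _
    obtain ⟨t, ht, hzt⟩ := hzY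
    refine ⟨⟨t, ht⟩, ?_⟩
    have h2 : (⟨z, hz⟩ : Y) ∈ Subtype.val ⁻¹' (UV (c ⟨t, ht⟩)).1 := by
      rw [hcspec ⟨t, ht⟩]; exact hzt
    exact h2
  -- Urysohn functions for finite intersections
  have hcl : ∀ A : Finset 𝒱, ∃ f : C(K, ℝ),
      f x = 0 ∧ (∀ z, z ∉ ⋂ v ∈ A, (UV (c v)).2 → f z = 1) ∧ ∀ z, f z ∈ Icc (0:ℝ) 1 := by
    intro A
    have hNopen : IsOpen (⋂ v ∈ A, (UV (c v)).2) :=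
      isOpen_biInter_finset fun v _ => (hUV (c v) (c v).2).2.1
    have hxN : x ∈ ⋂ v ∈ A, (UV (c v)).2 :=
      mem_biInter fun v _ => (hUV (c v) (c v).2).2.2.2.1
    obtain ⟨f, hf0, hf1, hf01⟩ := exists_continuous_zero_one_of_isClosed
      (isClosed_singleton (x := x)) (hNopen.isClosed_compl)
      (disjoint_left.mpr (by rintro z rfl; simpa using hxN))
    exact ⟨f, hf0 rfl, fun z hz => hf1 hz, hf01⟩
  choose hfun hfun0 hfun1 _hfun01 using hcl
  refine ⟨Set.range hfun, ?_, ?_⟩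
  · refine le_trans Cardinal.mk_range_le ?_
    refine le_trans (mk_finset_le 𝒱) (max_le ?_ (aleph0_le_hL K))
    exact le_trans h𝒱card (lindelofDeg_le_hL Y)
  · intro V hV
    obtain ⟨O, hOV, hO, hxO⟩ := mem_nhds_iff.mp hV
    have hcomp : IsCompact Oᶜ := hO.isClosed_compl.isCompact
    have hsub : Oᶜ ⊆ ⋃ v : 𝒱, (UV (c v)).1 := by
      intro z hz
      have hzx : z ≠ x := fun h => hz (h ▸ hxO)
      obtain ⟨v, hv⟩ := hcov z hzx
      exact mem_iUnion.mpr ⟨v, hv⟩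
    obtain ⟨A, hA⟩ := hcomp.elim_finite_subcover (fun v : 𝒱 => (UV (c v)).1)
      (fun v => (hUV (c v) (c v).2).1) hsub
    refine ⟨hfun A, mem_range_self A, by simpa using (hfun0 A).trans_lt one_pos, ?_⟩
    intro z hz
    simp only [mem_setOf_eq] at hz
    have hzN : z ∈ ⋂ v ∈ A, (UV (c v)).2 := by
      by_contra h
      exact absurd (hfun1 A z h) (by simpa using hz.ne)
    apply hOV
    by_contra hzO
    obtain ⟨v, hvA, hzU⟩ := mem_iUnion₂.mp (hA hzO)
    have hzV : z ∈ (UV (c v)).2 := mem_iInter₂.mp hzN v hvA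
    exact (hUV (c v) (c v).2).2.2.2.2.le_bot ⟨hzU, hzV⟩
end FactB

section FactA
open Set TopologicalSpace

lemma factA (K : Type) [TopologicalSpace K] [CompactSpace K] [T2Space K]
    {κ : Cardinal} (hw : weight K = κ) (hκ : ℵ₀ < κ) (F : Set C(K, ℝ)) (hF : #F < κ) :
    ∃ x y : K, x ≠ y ∧ ∀ g ∈ F, g x = g y := by
  by_contra hcon
  push_neg at hcon
  -- hcon : ∀ x y, x ≠ y → ∃ g ∈ F, g x ≠ g y
  set s : Set (Set K) :=
    Set.range (fun t : F × ℚ × ℚ => ((t.1 : C(K, ℝ)) : K → ℝ) ⁻¹' Ioo (t.2.1 : ℝ) (t.2.2 : ℝ))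
    with hs
  have h_le : (inferInstance : TopologicalSpace K) ≤ TopologicalSpace.generateFrom s := by
    apply le_generateFrom
    rintro u ⟨⟨g, p, q⟩, rfl⟩
    exact isOpen_Ioo.preimage (g : C(K, ℝ)).continuous
  have mkuv : ∀ g : C(K, ℝ), g ∈ F → ∀ a b : K, g a < g b →
      ∃ u v : Set K, (TopologicalSpace.generateFrom s).IsOpen u ∧ (TopologicalSpace.generateFrom s).IsOpen v ∧ a ∈ u ∧ b ∈ v ∧ Disjoint u v := by
    intro g hg a b hab
    obtain ⟨p, hp⟩ := exists_rat_lt (g a)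
    obtain ⟨q, hq1, hq2⟩ := exists_rat_btwn hab
    obtain ⟨r, hr⟩ := exists_rat_gt (g b)
    refine ⟨(g : K → ℝ) ⁻¹' Ioo (p : ℝ) q, (g : K → ℝ) ⁻¹' Ioo (q : ℝ) r,
      TopologicalSpace.GenerateOpen.basic _ ⟨(⟨g, hg⟩, p, q), rfl⟩,
      TopologicalSpace.GenerateOpen.basic _ ⟨(⟨g, hg⟩, q, r), rfl⟩,
      ⟨hp, hq1⟩, ⟨hq2, hr⟩, ?_⟩
    rw [Set.disjoint_left]
    rintro z ⟨_, h1⟩ ⟨h2, _⟩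
    exact absurd (h1.trans h2) (lt_irrefl _)
  have hT2 : @T2Space K (TopologicalSpace.generateFrom s) := by
    refine @T2Space.mk K (TopologicalSpace.generateFrom s) ?_
    intro a b hab
    obtain ⟨g, hg, hne⟩ := hcon a b hab
    rcases hne.lt_or_gt with h | h
    · exact mkuv g hg a b h
    · obtain ⟨u, v, hu, hv, hbu, hav, huv⟩ := mkuv g hg b a h
      exact ⟨v, u, hv, hu, hav, hbu, huv.symm⟩
  have hcont : @Continuous K K inferInstance (TopologicalSpace.generateFrom s) id :=
    continuous_id_iff_le.mpr h_le
  have hcont2 : @Continuous K K (TopologicalSpace.generateFrom s) inferInstance id :=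
    @Continuous.continuous_symm_of_equiv_compact_to_t2 K K inferInstance (TopologicalSpace.generateFrom s)
      inferInstance hT2 (Equiv.refl K) hcont
  have h_ge : TopologicalSpace.generateFrom s ≤ (inferInstance : TopologicalSpace K) :=
    continuous_id_iff_le.mp hcont2
  have heq : (inferInstance : TopologicalSpace K) = TopologicalSpace.generateFrom s :=
    le_antisymm h_le h_ge
  -- the basis from the subbasis
  have hbasis := TopologicalSpace.isTopologicalBasis_of_subbasis heq
  have hwle : weight K ≤ #((fun f : Set (Set K) => ⋂₀ f) '' { f : Set (Set K) | f.Finite ∧ f ⊆ s }) :=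
    csInf_le' ⟨_, hbasis, rfl⟩
  -- cardinality estimates
  have hscard : #s < κ := by
    refine lt_of_le_of_lt Cardinal.mk_range_le ?_
    have : #(F × ℚ × ℚ) = #F * ℵ₀ := by
      simp [Cardinal.mk_prod, Cardinal.mk_denumerable, Cardinal.aleph0_mul_aleph0]
    rw [this]
    exact Cardinal.mul_lt_of_lt hκ.le hF hκ
  have hfin : #({ f : Set (Set K) | f.Finite ∧ f ⊆ s }) ≤ #(Finset s) := by
    refine Cardinal.mk_le_of_surjective (f := fun A : Finset s =>
      (⟨Subtype.val '' (A : Set s), (A.finite_toSet).image _,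
        by rintro u ⟨⟨u', hu'⟩, _, rfl⟩; exact hu'⟩ :
        { f : Set (Set K) | f.Finite ∧ f ⊆ s })) ?_
    rintro ⟨f, hfin, hsub⟩
    have hpre : (Subtype.val ⁻¹' f : Set s).Finite :=
      hfin.preimage (Subtype.val_injective.injOn)
    refine ⟨hpre.toFinset, ?_⟩
    ext u
    simp only [Set.Finite.coe_toFinset, Subtype.image_preimage_coe]
    constructor
    · rintro ⟨hu, hu'⟩; exact hu'
    · intro hu; exact ⟨hsub hu, hu⟩
  have hBcard : #((fun f : Set (Set K) => ⋂₀ f) '' { f : Set (Set K) | f.Finite ∧ f ⊆ s }) < κ := by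
    refine lt_of_le_of_lt (Cardinal.mk_image_le) (lt_of_le_of_lt hfin ?_)
    exact lt_of_le_of_lt (mk_finset_le s) (max_lt hscard hκ)
  rw [hw] at hwle
  exact absurd (lt_of_le_of_lt hwle hBcard) (lt_irrefl κ)
end FactA

section Construction
open Set TopologicalSpace
open scoped Classical

variable (K : Type) [TopologicalSpace K] [CompactSpace K] [T2Space K] [Nonempty K]

/-- neighbourhood-base functions at a point -/
noncomputable def nbX (x : K) : Set C(K, ℝ) := (factB x).choose

lemma nbX_card (x : K) : #(nbX K x) ≤ hL K := (factB x).choose_spec.1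

lemma nbX_spec (x : K) : ∀ V ∈ nhds x, ∃ h ∈ nbX K x, h x < 1 ∧ {z : K | h z < 1} ⊆ V :=
  (factB x).choose_spec.2

noncomputable def nbY (y : K) : Set C(K, ℝ) := (fun h => 1 - h) '' nbX K y

lemma nbY_card (y : K) : #(nbY K y) ≤ hL K :=
  le_trans Cardinal.mk_image_le (nbX_card K y)

/-- choice of a pair of points not separated by `F` -/
noncomputable def pairP (F : Set C(K, ℝ)) : K × K :=
  if h : ∃ p : K × K, p.1 ≠ p.2 ∧ ∀ g ∈ F, g p.1 = g p.2 then h.choose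
  else (Classical.arbitrary K, Classical.arbitrary K)

noncomputable def xP (F : Set C(K, ℝ)) : K := (pairP K F).1
noncomputable def yP (F : Set C(K, ℝ)) : K := (pairP K F).2

lemma pairP_spec {F : Set C(K, ℝ)} (h : ∃ p : K × K, p.1 ≠ p.2 ∧ ∀ g ∈ F, g p.1 = g p.2) :
    xP K F ≠ yP K F ∧ ∀ g ∈ F, g (xP K F) = g (yP K F) := by
  rw [xP, yP, pairP, dif_pos h]
  exact h.choose_spec

/-- Urysohn function separating two points -/
noncomputable def urys (x y : K) : C(K, ℝ) :=
  if h : x ≠ y then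
    (exists_continuous_zero_one_of_isClosed (isClosed_singleton (x := x))
      (isClosed_singleton (x := y)) (by simpa using h)).choose
  else 0

lemma urys_spec {x y : K} (h : x ≠ y) : urys K x y x = 0 ∧ urys K x y y = 1 := by
  rw [urys, dif_pos h]
  obtain ⟨h0, h1, -⟩ := (exists_continuous_zero_one_of_isClosed (isClosed_singleton (x := x))
      (isClosed_singleton (x := y)) (by simpa using h)).choose_spec
  exact ⟨h0 rfl, h1 rfl⟩

/-- Urysohn function for condition (e)(i) -/
noncomputable def eW (f g : C(K, ℝ)) (p q : ℚ) : C(K, ℝ) :=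
  if h : {z : K | f z ≤ (p : ℝ)} ∩ {z : K | (q : ℝ) ≤ g z} = ∅ then
    (exists_continuous_zero_one_of_isClosed (isClosed_le f.continuous continuous_const)
      (isClosed_le continuous_const g.continuous)
      (Set.disjoint_iff_inter_eq_empty.mpr h)).choose
  else 0

lemma eW_spec {f g : C(K, ℝ)} {p q : ℚ}
    (h : {z : K | f z ≤ (p : ℝ)} ∩ {z : K | (q : ℝ) ≤ g z} = ∅) :
    (∀ z : K, f z ≤ (p : ℝ) → eW K f g p q z = 0) ∧
      (∀ z : K, (q : ℝ) ≤ g z → eW K f g p q z = 1) := by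
  rw [eW, dif_pos h]
  obtain ⟨h0, h1, -⟩ := (exists_continuous_zero_one_of_isClosed
    (isClosed_le f.continuous continuous_const) (isClosed_le continuous_const g.continuous)
    (Set.disjoint_iff_inter_eq_empty.mpr h)).choose_spec
  exact ⟨fun z hz => h0 hz, fun z hz => h1 hz⟩

noncomputable def step1 (F : Set C(K, ℝ)) : Set C(K, ℝ) :=
  F ∪ ⋃ (f ∈ F) (g ∈ F) (p : ℚ) (q : ℚ), {eW K f g p q}

lemma subset_step1 (F : Set C(K, ℝ)) : F ⊆ step1 K F := Set.subset_union_left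

lemma eW_mem_step1 {F : Set C(K, ℝ)} {f g : C(K, ℝ)} (hf : f ∈ F) (hg : g ∈ F) (p q : ℚ) :
    eW K f g p q ∈ step1 K F := by
  apply Set.mem_union_right
  simp only [Set.mem_iUnion]
  exact ⟨f, hf, g, hg, p, q, rfl⟩

lemma mk_step1_le {F : Set C(K, ℝ)} {c : Cardinal} (hc : ℵ₀ ≤ c) (hF : #F ≤ c) :
    #(step1 K F) ≤ c := by
  have hX : #(⋃ (f ∈ F) (g ∈ F) (p : ℚ) (q : ℚ), ({eW K f g p q} : Set C(K, ℝ))) ≤ c := by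
    have hsub : (⋃ (f ∈ F) (g ∈ F) (p : ℚ) (q : ℚ), ({eW K f g p q} : Set C(K, ℝ))) ⊆
        Set.range (fun t : F × F × ℚ × ℚ => eW K t.1 t.2.1 t.2.2.1 t.2.2.2) := by
      intro h hh
      simp only [Set.mem_iUnion, Set.mem_singleton_iff] at hh
      obtain ⟨f, hf, g, hg, p, q, rfl⟩ := hh
      exact ⟨(⟨f, hf⟩, ⟨g, hg⟩, p, q), rfl⟩
    refine le_trans (Cardinal.mk_le_mk_of_subset hsub) (le_trans Cardinal.mk_range_le ?_)
    have : #(F × F × ℚ × ℚ) = #F * (#F * ℵ₀) := by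
      simp [Cardinal.mk_prod, Cardinal.mk_denumerable, Cardinal.aleph0_mul_aleph0]
    rw [this]
    refine le_trans ?_ (le_of_eq (by rw [Cardinal.mul_eq_self hc, Cardinal.mul_eq_self hc] :
      c * (c * c) = c))
    gcongr <;> first | exact hF | exact hc
  refine le_trans (Cardinal.mk_union_le _ _) ?_
  refine le_trans (add_le_add hF hX) ?_
  rw [Cardinal.add_eq_self hc]

lemma step1_iterate_mono {F : Set C(K, ℝ)} {m n : ℕ} (h : m ≤ n) :
    (step1 K)^[m] F ⊆ (step1 K)^[n] F := by
  induction n with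
  | zero => simp_all
  | succ n ih =>
    rcases Nat.lt_or_ge m (n+1) with h' | h'
    · refine le_trans (ih (Nat.lt_succ_iff.mp h')) ?_
      rw [Function.iterate_succ_apply']
      exact subset_step1 K _
    · have : m = n + 1 := le_antisymm h h'
      subst this
      exact Set.Subset.rfl

noncomputable def eCl (F : Set C(K, ℝ)) : Set C(K, ℝ) := ⋃ n : ℕ, (step1 K)^[n] F

lemma subset_eCl (F : Set C(K, ℝ)) : F ⊆ eCl K F :=
  Set.subset_iUnion (fun n : ℕ => (step1 K)^[n] F) 0

lemma eCl_closed {F : Set C(K, ℝ)} {f g : C(K, ℝ)} (hf : f ∈ eCl K F) (hg : g ∈ eCl K F)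
    (p q : ℚ) : eW K f g p q ∈ eCl K F := by
  obtain ⟨m, hm⟩ := Set.mem_iUnion.mp hf
  obtain ⟨n, hn⟩ := Set.mem_iUnion.mp hg
  have hfm : f ∈ (step1 K)^[max m n] F := step1_iterate_mono K (le_max_left m n) hm
  have hgn : g ∈ (step1 K)^[max m n] F := step1_iterate_mono K (le_max_right m n) hn
  refine Set.mem_iUnion.mpr ⟨max m n + 1, ?_⟩
  rw [Function.iterate_succ_apply']
  exact eW_mem_step1 K hfm hgn p q

lemma mk_eCl_le {F : Set C(K, ℝ)} {c : Cardinal} (hc : ℵ₀ ≤ c) (hF : #F ≤ c) :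
    #(eCl K F) ≤ c := by
  have hn : ∀ n : ℕ, #((step1 K)^[n] F) ≤ c := by
    intro n
    induction n with
    | zero => simpa using hF
    | succ n ih =>
      rw [Function.iterate_succ_apply']
      exact mk_step1_le K hc ih
  refine le_trans (Cardinal.mk_iUnion_le _) ?_
  have h2 : #ℕ * ⨆ n, #((step1 K)^[n] F) ≤ ℵ₀ * c := by
    gcongr
    · exact Cardinal.mk_nat.le
    · exact ciSup_le' hn
  refine le_trans h2 ?_
  calc ℵ₀ * c ≤ c * c := by gcongr
    _ = c := Cardinal.mul_eq_self hc

noncomputable def step (F : Set C(K, ℝ)) : Set C(K, ℝ) :=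
  eCl K (insert (urys K (xP K F) (yP K F)) F ∪ nbX K (xP K F) ∪ nbY K (yP K F))

lemma subset_step (F : Set C(K, ℝ)) : F ⊆ step K F :=
  le_trans (le_trans (Set.subset_insert _ _) (le_trans Set.subset_union_left
    Set.subset_union_left)) (subset_eCl K _)

lemma mk_step_le {F : Set C(K, ℝ)} {c : Cardinal} (hc : ℵ₀ ≤ c) (hhL : hL K ≤ c)
    (hF : #F ≤ c) : #(step K F) ≤ c := by
  apply mk_eCl_le K hc
  have h1 : #(insert (urys K (xP K F) (yP K F)) F : Set C(K, ℝ)) ≤ c := by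
    refine le_trans Cardinal.mk_insert_le ?_
    calc #F + 1 ≤ c + c := add_le_add hF (le_trans Cardinal.one_le_aleph0 hc)
      _ = c := Cardinal.add_eq_self hc
  have h2 : #(insert (urys K (xP K F) (yP K F)) F ∪ nbX K (xP K F) : Set C(K, ℝ)) ≤ c := by
    refine le_trans (Cardinal.mk_union_le _ _) ?_
    calc _ ≤ c + c := add_le_add h1 (le_trans (nbX_card K _) hhL)
      _ = c := Cardinal.add_eq_self hc
  refine le_trans (Cardinal.mk_union_le _ _) ?_
  calc _ ≤ c + c := add_le_add h2 (le_trans (nbY_card K _) hhL)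
    _ = c := Cardinal.add_eq_self hc

end Construction

section Fbuild
open Set TopologicalSpace

variable (K : Type) [TopologicalSpace K] [CompactSpace K] [T2Space K] [Nonempty K]

noncomputable def Fb : Ordinal → Set C(K, ℝ) := fun o =>
  Ordinal.limitRecOn o ∅ (fun _ ih => step K ih)
    (fun o _ ih => ⋃ (γ : Ordinal) (h : γ < o), ih γ h)

lemma Fb_zero : Fb K 0 = ∅ := Ordinal.limitRecOn_zero _ _ _

lemma Fb_succ (o : Ordinal) : Fb K (o + 1) = step K (Fb K o) := by
  rw [Fb, Ordinal.add_one_eq_succ, Ordinal.limitRecOn_succ]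
  rfl

lemma Fb_limit {l : Ordinal} (h : Order.IsSuccLimit l) :
    Fb K l = ⋃ (γ : Ordinal) (_ : γ < l), Fb K γ := by
  rw [Fb, Ordinal.limitRecOn_limit _ _ _ _ h]
  rfl

lemma Fb_mono : ∀ γ' γ : Ordinal, γ ≤ γ' → Fb K γ ⊆ Fb K γ' := by
  intro γ'
  induction γ' using Ordinal.limitRecOn with
  | zero =>
    intro γ hγ
    rw [nonpos_iff_eq_zero.mp hγ]
  | add_one o ih =>
    intro γ hγ
    rcases eq_or_lt_of_le hγ with h | h
    · rw [h]
    · have : γ ≤ o := Order.lt_succ_iff.mp h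
      rw [Fb_succ]
      exact le_trans (ih γ this) (subset_step K _)
  | limit l hl ih =>
    intro γ hγ
    rcases eq_or_lt_of_le hγ with h | h
    · rw [h]
    · rw [Fb_limit K hl]
      exact Set.subset_iUnion₂ (s := fun γ (_ : γ < l) => Fb K γ) γ h

lemma Fb_eClosed : ∀ o : Ordinal, ∀ f ∈ Fb K o, ∀ g ∈ Fb K o, ∀ p q : ℚ,
    eW K f g p q ∈ Fb K o := by
  intro o
  induction o using Ordinal.limitRecOn with
  | zero => rw [Fb_zero]; intro f hf; exact absurd hf (Set.notMem_empty f)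
  | add_one o _ =>
    rw [Fb_succ]
    intro f hf g hg p q
    exact eCl_closed K hf hg p q
  | limit l hl ih =>
    intro f hf g hg p q
    rw [Fb_limit K hl] at hf hg ⊢
    obtain ⟨γ₁, h₁, hf⟩ := Set.mem_iUnion₂.mp hf
    obtain ⟨γ₂, h₂, hg⟩ := Set.mem_iUnion₂.mp hg
    have hm : max γ₁ γ₂ < l := max_lt h₁ h₂
    refine Set.mem_iUnion₂.mpr ⟨max γ₁ γ₂, hm, ?_⟩
    exact ih (max γ₁ γ₂) hm f (Fb_mono K _ _ (le_max_left _ _) hf) g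
      (Fb_mono K _ _ (le_max_right _ _) hg) p q

lemma Fb_card : ∀ o : Ordinal, #(Fb K o) ≤ hL K + o.card := by
  intro o
  induction o using Ordinal.limitRecOn with
  | zero => rw [Fb_zero]; simp
  | add_one o ih =>
    rw [Fb_succ]
    have hc : ℵ₀ ≤ hL K + (o + 1).card :=
      le_trans (aleph0_le_hL K) le_self_add
    refine mk_step_le K hc le_self_add (le_trans ih ?_)
    have hcard : o.card ≤ (o + 1).card :=
      Ordinal.card_le_card (le_of_lt (by rw [Ordinal.add_one_eq_succ]; exact Order.lt_succ o))
    exact add_le_add_right hcard _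
  | limit l hl ih =>
    rw [Fb_limit K hl]
    have hc : ℵ₀ ≤ hL K + l.card := le_trans (aleph0_le_hL K) le_self_add
    have hre : (⋃ (γ : Ordinal) (_ : γ < l), Fb K γ) = ⋃ γ : Set.Iio l, Fb K γ := by
      ext z; simp
    rw [hre]
    have hlift := Cardinal.mk_iUnion_le_lift (fun γ : Set.Iio l => Fb K γ.1)
    rw [Ordinal.mk_Iio_ordinal] at hlift
    simp only [Cardinal.lift_id'] at hlift
    have hsup : ⨆ γ : Set.Iio l, Cardinal.lift.{1} #(Fb K γ.1) ≤
        Cardinal.lift.{1} (hL K + l.card) := by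
      refine ciSup_le' fun γ => Cardinal.lift_le.mpr ?_
      exact le_trans (ih γ.1 γ.2) (add_le_add_right (Ordinal.card_le_card γ.2.le) _)
    have h2 := le_trans hlift (mul_le_mul' le_rfl hsup)
    rw [← Cardinal.lift_mul] at h2
    have hfin : l.card * (hL K + l.card) ≤ hL K + l.card := by
      calc l.card * (hL K + l.card) ≤ (hL K + l.card) * (hL K + l.card) := by
            gcongr; exact le_add_self
        _ = hL K + l.card := Cardinal.mul_eq_self hc
    exact Cardinal.lift_le.mp (le_trans h2 (Cardinal.lift_le.mpr hfin))

end Fbuild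

/-- Lemma 1.1 of the paper: for a compact Hausdorff space `K` of weight `κ` with
`hL(K)⁺ < κ` there are sequences `(F γ)`, `(f γ)` and `(x γ, y γ)` indexed by the ordinals
`γ < κ` satisfying conditions (a)–(e). -/
theorem exists_sequences_of_succ_hL_lt_weight (K : Type) [TopologicalSpace K]
    [CompactSpace K] [T2Space K] (κ : Cardinal) (hw : weight K = κ)
    (hκ : Order.succ (hL K) < κ) :
    ∃ (F : Ordinal → Set C(K, ℝ)) (f : Ordinal → C(K, ℝ)) (x y : Ordinal → K),
      -- (a)
      (∀ γ < κ.ord, #(F γ) < κ) ∧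
      (∀ γ γ' : Ordinal, γ ≤ γ' → γ' < κ.ord → F γ ⊆ F γ') ∧
      -- (b)
      (∀ l < κ.ord, Order.IsSuccLimit l → F l = ⋃ (γ : Ordinal) (_ : γ < l), F γ) ∧
      -- (c)
      (∀ γ < κ.ord, f γ ∈ F (γ + 1) ∧ f γ (x γ) = 0 ∧ f γ (y γ) = 1) ∧
      -- (d)
      (∀ γ < κ.ord, ∀ g ∈ F γ, g (x γ) = g (y γ)) ∧
      -- (e) (i)
      (∀ γ < κ.ord, ∀ f' ∈ F γ, ∀ g' ∈ F γ, ∀ p q : ℚ,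
        {z : K | f' z ≤ (p : ℝ)} ∩ {z : K | (q : ℝ) ≤ g' z} = ∅ →
          ∃ h₁ ∈ F γ, (∀ z : K, f' z ≤ (p : ℝ) → h₁ z = 0) ∧
            (∀ z : K, (q : ℝ) ≤ g' z → h₁ z = 1)) ∧
      -- (e) (ii)
      (∀ γ < κ.ord, ∀ V ∈ nhds (x γ),
        ∃ h₂ ∈ F (γ + 1), x γ ∈ {z : K | h₂ z < 1} ∧ {z : K | h₂ z < 1} ⊆ V) ∧
      -- (e) (iii)
      (∀ γ < κ.ord, ∀ W ∈ nhds (y γ),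
        ∃ h₃ ∈ F (γ + 1), y γ ∈ {z : K | 0 < h₃ z} ∧ {z : K | 0 < h₃ z} ⊆ W) := by
  classical
  have hθ0 : ℵ₀ ≤ hL K := aleph0_le_hL K
  have hθκ : hL K < κ := lt_of_lt_of_le (Order.lt_succ (hL K)) hκ.le
  have haleph : ℵ₀ < κ := lt_of_le_of_lt hθ0 hθκ
  haveI hne : Nonempty K := by
    by_contra h
    rw [not_nonempty_iff] at h
    have hbasis : TopologicalSpace.IsTopologicalBasis (∅ : Set (Set K)) := by
      refine TopologicalSpace.isTopologicalBasis_of_isOpen_of_nhds ?_ ?_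
      · intro u hu; exact absurd hu (Set.notMem_empty u)
      · intro a; exact (h.false a).elim
    have hle : weight K ≤ 0 := csInf_le' ⟨∅, hbasis, by simp⟩
    rw [hw] at hle
    exact absurd (lt_of_le_of_lt hle (lt_of_le_of_lt zero_le haleph))
      (lt_irrefl κ)
  have hcard : ∀ γ, γ < κ.ord → #(Fb K γ) < κ := by
    intro γ hγ
    refine lt_of_le_of_lt (Fb_card K γ) ?_
    exact Cardinal.add_lt_of_lt haleph.le hθκ (Cardinal.lt_ord.mp hγ)
  have hpair : ∀ γ, γ < κ.ord →
      xP K (Fb K γ) ≠ yP K (Fb K γ) ∧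
        ∀ g ∈ Fb K γ, g (xP K (Fb K γ)) = g (yP K (Fb K γ)) := by
    intro γ hγ
    apply pairP_spec
    obtain ⟨x, y, hxy, hsep⟩ := factA K hw haleph (Fb K γ) (hcard γ hγ)
    exact ⟨(x, y), hxy, hsep⟩
  refine ⟨Fb K, fun γ => urys K (xP K (Fb K γ)) (yP K (Fb K γ)),
    fun γ => xP K (Fb K γ), fun γ => yP K (Fb K γ), ?_, ?_, ?_, ?_, ?_, ?_, ?_, ?_⟩
  · exact fun γ hγ => hcard γ hγ
  · exact fun γ γ' h _ => Fb_mono K γ' γ h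
  · exact fun l _ hl => Fb_limit K hl
  · intro γ hγ
    have hxy := (hpair γ hγ).1
    refine ⟨?_, (urys_spec K hxy).1, (urys_spec K hxy).2⟩
    rw [Fb_succ]
    exact subset_eCl K _ (Set.mem_union_left _ (Set.mem_union_left _ (Set.mem_insert _ _)))
  · exact fun γ hγ => (hpair γ hγ).2
  · intro γ hγ f' hf' g' hg' p q hpq
    exact ⟨eW K f' g' p q, Fb_eClosed K γ f' hf' g' hg' p q,
      (eW_spec K hpq).1, (eW_spec K hpq).2⟩
  · intro γ hγ V hV
    obtain ⟨h, hmem, hlt, hsub⟩ := nbX_spec K (xP K (Fb K γ)) V hV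
    refine ⟨h, ?_, hlt, hsub⟩
    rw [Fb_succ]
    exact subset_eCl K _ (Set.mem_union_left _ (Set.mem_union_right _ hmem))
  · intro γ hγ W hW
    obtain ⟨h, hmem, hlt, hsub⟩ := nbX_spec K (yP K (Fb K γ)) W hW
    refine ⟨1 - h, ?_, ?_, ?_⟩
    · rw [Fb_succ]
      exact subset_eCl K _ (Set.mem_union_right _ ⟨h, hmem, rfl⟩)
    · show (0:ℝ) < (1 - h) (yP K (Fb K γ))
      have hval : (1 - h) (yP K (Fb K γ)) = 1 - h (yP K (Fb K γ)) := by simp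
      rw [hval]
      linarith
    · intro z hz
      apply hsub
      simp only [Set.mem_setOf_eq] at hz ⊢
      have hval : (1 - h) z = 1 - h z := by simp
      rw [hval] at hz
      linarith
end

section
/- Let K be a compact Hausdorff space such that the weight w(K) is a strong limit cardinal. Then w(K) = bd(K). -/
open Cardinal

/-- `bd K` is the supremum of the cardinalities of bidiscrete systems in `K`. -/
noncomputable def bd (K : Type) [TopologicalSpace K] : Cardinal :=
  sSup {c : Cardinal | ∃ (ι : Type) (x y : ι → K) (f : ι → C(K, ℝ)),
    c = #ι ∧ (∀ α, f α (x α) = 0 ∧ f α (y α) = 1) ∧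
    ∀ α β, α ≠ β → f α (x β) = f α (y β)}

namespace BdProof

open Set TopologicalSpace Topology

variable {K : Type} [TopologicalSpace K]

/-- The set of cardinalities of bidiscrete systems. -/
def bdSet (K : Type) [TopologicalSpace K] : Set Cardinal :=
  {c : Cardinal | ∃ (ι : Type) (x y : ι → K) (f : ι → C(K, ℝ)),
    c = #ι ∧ (∀ α, f α (x α) = 0 ∧ f α (y α) = 1) ∧
    ∀ α β, α ≠ β → f α (x β) = f α (y β)}

lemma bd_eq_sSup (K : Type) [TopologicalSpace K] : bd K = sSup (bdSet K) := rfl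

lemma zero_mem_bdSet : 0 ∈ bdSet K := by
  refine ⟨Empty, Empty.elim, Empty.elim, Empty.elim, ?_, fun α => α.elim, fun α => α.elim⟩
  simp

lemma bdSet_nonempty : (bdSet K).Nonempty := ⟨0, zero_mem_bdSet⟩

lemma le_of_mem_bdSet {c : Cardinal} (hc : c ∈ bdSet K) : c ≤ #K * #K := by
  obtain ⟨ι, x, y, f, rfl, hf1, hf2⟩ := hc
  have : Function.Injective (fun α => (x α, y α)) := by
    intro α β hab
    by_contra hne
    simp only [Prod.mk.injEq] at hab
    have h0 := (hf1 α).1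
    have h1 := (hf1 α).2
    have h2 := hf2 α β hne
    rw [← hab.1, ← hab.2] at h2
    rw [h0, h1] at h2
    norm_num at h2
  calc #ι ≤ #(K × K) := mk_le_of_injective this
    _ = #K * #K := by rw [mk_prod]; simp

lemma bdSet_bddAbove : BddAbove (bdSet K) :=
  ⟨#K * #K, fun _ hc => le_of_mem_bdSet hc⟩

lemma le_bd_of_mem {c : Cardinal} (hc : c ∈ bdSet K) : c ≤ bd K :=
  le_csSup bdSet_bddAbove hc

lemma bd_le_of_forall {c : Cardinal} (hc : ∀ d ∈ bdSet K, d ≤ c) : bd K ≤ c :=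
  csSup_le bdSet_nonempty hc

lemma exists_basis_weight (K : Type) [TopologicalSpace K] :
    ∃ B : Set (Set K), IsTopologicalBasis B ∧ weight K = #B := by
  have hne : {c : Cardinal | ∃ B : Set (Set K), IsTopologicalBasis B ∧ c = #B}.Nonempty :=
    ⟨#{U : Set K | IsOpen U}, {U : Set K | IsOpen U}, isTopologicalBasis_opens, rfl⟩
  exact csInf_mem hne

lemma weight_le_basis {B : Set (Set K)} (hB : IsTopologicalBasis B) : weight K ≤ #B :=
  csInf_le' ⟨B, hB, rfl⟩


lemma disjoint_rat_intervals {u v : ℝ} (huv : u ≠ v) :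
    ∃ p q r s : ℚ, u ∈ Set.Ioo (p : ℝ) q ∧ v ∈ Set.Ioo (r : ℝ) s ∧
      Disjoint (Set.Ioo (p : ℝ) q) (Set.Ioo (r : ℝ) s) := by
  have key : ∀ a b : ℝ, a < b → ∃ p q r s : ℚ, a ∈ Set.Ioo (p : ℝ) q ∧
      b ∈ Set.Ioo (r : ℝ) s ∧ Disjoint (Set.Ioo (p : ℝ) q) (Set.Ioo (r : ℝ) s) := by
    intro a b hlt
    obtain ⟨m, hm1, hm2⟩ := exists_rat_btwn hlt
    obtain ⟨p, hp⟩ := exists_rat_lt a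
    obtain ⟨d, hd⟩ := exists_rat_gt b
    refine ⟨p, m, m, d, ⟨hp, hm1⟩, ⟨hm2, hd⟩, ?_⟩
    rw [Set.disjoint_left]
    rintro z ⟨_, hzm⟩ ⟨hmz, _⟩
    exact absurd (hzm.trans hmz) (lt_irrefl z)
  rcases lt_or_gt_of_ne huv with hlt | hlt
  · exact key u v hlt
  · obtain ⟨p, q, r, s, h1, h2, h3⟩ := key v u hlt
    exact ⟨r, s, p, q, h2, h1, h3.symm⟩

/-- A separating family of continuous functions bounds the weight. -/
lemma weight_le_of_separating [CompactSpace K] {ι' : Type} (g : ι' → C(K, ℝ))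
    (hsep : ∀ x y : K, x ≠ y → ∃ i, g i x ≠ g i y) :
    weight K ≤ max #ι' ℵ₀ := by
  classical
  set pre : ι' × ℚ × ℚ → Set K := fun e => (g e.1) ⁻¹' (Set.Ioo (e.2.1 : ℝ) e.2.2) with hpre
  set B : Set (Set K) := Set.range (fun s : Finset (ι' × ℚ × ℚ) => ⋂ e ∈ s, pre e) with hB
  have hbasis : IsTopologicalBasis B := by
    apply isTopologicalBasis_of_isOpen_of_nhds
    · rintro _ ⟨s, rfl⟩
      exact isOpen_biInter_finset fun e _ =>
        (isOpen_Ioo).preimage (g e.1).continuous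
    · intro a U haU hU
      have hUc : IsCompact (Uᶜ : Set K) := hU.isClosed_compl.isCompact
      have key : ∀ w : (Uᶜ : Set K),
          ∃ e : ι' × ℚ × ℚ, ∃ r s : ℚ, a ∈ pre e ∧ g e.1 w.1 ∈ Set.Ioo (r : ℝ) s ∧
            Disjoint (Set.Ioo (e.2.1 : ℝ) e.2.2) (Set.Ioo (r : ℝ) s) := by
        intro w
        have haw : a ≠ w.1 := fun hh => w.2 (hh ▸ haU)
        obtain ⟨i, hi⟩ := hsep a w.1 haw
        obtain ⟨p, q, r, s, h1, h2, h3⟩ := disjoint_rat_intervals hi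
        exact ⟨(i, p, q), r, s, h1, h2, h3⟩
      choose e r s h1 h2 h3 using key
      set F : (Uᶜ : Set K) → Set K :=
        fun w => (g (e w).1) ⁻¹' (Set.Ioo ((r w : ℝ)) (s w)) with hF
      have hcover : (Uᶜ : Set K) ⊆ ⋃ w : (Uᶜ : Set K), F w := by
        intro w hw
        exact Set.mem_iUnion.mpr ⟨⟨w, hw⟩, h2 ⟨w, hw⟩⟩
      obtain ⟨t, ht⟩ := hUc.elim_finite_subcover F
        (fun w => (isOpen_Ioo).preimage (g _).continuous) hcover
      refine ⟨⋂ e' ∈ t.image e, pre e', ⟨_, rfl⟩, ?_, ?_⟩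
      · exact Set.mem_biInter fun e' he' => by
          obtain ⟨w, _, rfl⟩ := Finset.mem_image.mp he'
          exact h1 w
      · intro z hz
        by_contra hzU
        obtain ⟨w, hwt, hwz⟩ := Set.mem_iUnion₂.mp (ht (hzU : z ∈ (Uᶜ : Set K)))
        have hz1 : z ∈ pre (e w) :=
          Set.mem_iInter₂.mp hz _ (Finset.mem_image.mpr ⟨w, hwt, rfl⟩)
        exact (h3 w).le_bot ⟨hz1, hwz⟩
  refine (weight_le_basis hbasis).trans ?_
  have h1 : #B ≤ #(Finset (ι' × ℚ × ℚ)) := mk_range_le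
  refine h1.trans ?_
  rcases isEmpty_or_nonempty (ι' × ℚ × ℚ) with hemp | hne
  · haveI : Fintype (ι' × ℚ × ℚ) := Fintype.ofIsEmpty
    exact le_max_of_le_right (mk_lt_aleph0_iff.mpr inferInstance).le
  · have h2 : #(Finset (ι' × ℚ × ℚ)) ≤ #(List (ι' × ℚ × ℚ)) := by
      refine mk_le_of_injective (f := fun t : Finset (ι' × ℚ × ℚ) => t.toList) ?_
      intro a b hab
      have := congrArg List.toFinset hab
      simpa using this
    refine (h2.trans_eq (mk_list_eq_max_mk_aleph0 _)).trans ?_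
    have h3 : #(ι' × ℚ × ℚ) ≤ max #ι' ℵ₀ := by
      rw [mk_prod, mk_prod]
      simp only [mk_denumerable, lift_id, lift_aleph0, aleph0_mul_aleph0]
      calc #ι' * ℵ₀ ≤ max #ι' ℵ₀ * max #ι' ℵ₀ :=
            mul_le_mul' (le_max_left _ _) (le_max_right _ _)
        _ = max #ι' ℵ₀ := mul_eq_self (le_max_right _ _)
    exact max_le h3 (le_max_right _ _)

/-- If the weight is big, no small family of continuous functions separates points. -/
lemma exists_unseparated [CompactSpace K] {ι' : Type} (g : ι' → C(K, ℝ))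
    (hw : max #ι' ℵ₀ < weight K) :
    ∃ x y : K, x ≠ y ∧ ∀ i, g i x = g i y := by
  by_contra hcon
  push_neg at hcon
  have : ∀ x y : K, x ≠ y → ∃ i, g i x ≠ g i y := by
    intro x y hxy
    obtain ⟨i, hi⟩ := hcon x y hxy
    exact ⟨i, hi⟩
  exact absurd (weight_le_of_separating g this) (not_le.mpr hw)


lemma aleph0_mem_bdSet [CompactSpace K] [T2Space K] [Infinite K] : ℵ₀ ∈ bdSet K := by
  classical
  set Iso : Set K := {z : K | IsOpen ({z} : Set K)} with hIso
  rcases Set.infinite_or_finite Iso with hinf | hfin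
  · -- infinitely many isolated points: use indicators of isolated singletons
    set e := hinf.natEmbedding with he
    set x : ℕ → K := fun n => (e (2 * n)).1 with hx
    set y : ℕ → K := fun n => (e (2 * n + 1)).1 with hy
    have hyiso : ∀ n, IsClopen ({y n} : Set K) := fun n => ⟨isClosed_singleton, (e (2 * n + 1)).2⟩
    have ecoe : Function.Injective (fun m : ℕ => ((e m).1 : K)) := fun a b hab =>
      e.injective (Subtype.val_injective hab)
    have hxy : ∀ n m, x n ≠ y m := by
      intro n m hh
      have := ecoe hh
      omega
    have hyy : ∀ n m, n ≠ m → y n ≠ y m := by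
      intro n m hnm hh
      have := ecoe hh
      omega
    set f : ℕ → C(K, ℝ) := fun n =>
      ⟨({y n} : Set K).piecewise (fun _ => (1:ℝ)) (fun _ => 0), by
        refine Continuous.piecewise ?_ continuous_const continuous_const
        rw [(hyiso n).frontier_eq]
        exact fun a ha => absurd ha (Set.notMem_empty a)⟩ with hf
    refine ⟨ℕ, x, y, f, (mk_denumerable ℕ).symm, ?_, ?_⟩
    · intro n
      simp only [hf, ContinuousMap.coe_mk]
      constructor
      · rw [Set.piecewise_eq_of_notMem]
        simpa using hxy n n
      · rw [Set.piecewise_eq_of_mem]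
        exact rfl
    · intro a b hab
      simp only [hf, ContinuousMap.coe_mk]
      rw [Set.piecewise_eq_of_notMem, Set.piecewise_eq_of_notMem]
      · simpa using (hyy b a (fun hh => hab hh.symm))
      · simpa using hxy b a
  · -- finitely many isolated points
    have hJop : IsOpen Iso := by
      have : Iso = ⋃ z ∈ Iso, ({z} : Set K) := by simp
      rw [this]
      exact isOpen_biUnion fun z hz => hz
    have hJcl : IsClosed Iso := hfin.isClosed
    have hcompl : (Isoᶜ : Set K).Infinite := hfin.infinite_compl
    have hnt : ∀ V : Set K, IsOpen V → V ⊆ Isoᶜ → V.Nonempty → V.Nontrivial := by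
      intro V hV hVJ ⟨z, hz⟩
      by_contra hns
      rw [Set.not_nontrivial_iff] at hns
      rcases hns.eq_empty_or_singleton with rfl | ⟨z', rfl⟩
      · exact hz
      · exact hVJ (Set.mem_singleton z') (by simpa [hIso] using hV)
    set G := {V : Set K // IsOpen V ∧ V ⊆ Isoᶜ ∧ V.Nontrivial} with hG
    have hsplit : ∀ V : G, ∃ A B : G, A.1 ⊆ V.1 ∧ B.1 ⊆ V.1 ∧ Disjoint A.1 B.1 := by
      rintro ⟨V, hVo, hVJ, hVnt⟩
      obtain ⟨u, hu, v, hv, huv⟩ := hVnt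
      obtain ⟨A', B', hA'o, hB'o, huA, hvB, hAB⟩ := t2_separation huv
      refine ⟨⟨A' ∩ V, hA'o.inter hVo, Set.inter_subset_right.trans hVJ,
          hnt _ (hA'o.inter hVo) (Set.inter_subset_right.trans hVJ) ⟨u, huA, hu⟩⟩,
        ⟨B' ∩ V, hB'o.inter hVo, Set.inter_subset_right.trans hVJ,
          hnt _ (hB'o.inter hVo) (Set.inter_subset_right.trans hVJ) ⟨v, hvB, hv⟩⟩,
        Set.inter_subset_right, Set.inter_subset_right, ?_⟩
      exact (hAB.mono Set.inter_subset_left Set.inter_subset_left)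
    choose sp1 sp2 hsp1 hsp2 hspd using hsplit
    have hV0 : G := ⟨Isoᶜ, hJcl.isOpen_compl, le_refl _, hcompl.nontrivial⟩
    set Vc : ℕ → G := fun n => Nat.recAux hV0 (fun _ W => sp2 W) n with hVc
    set U : ℕ → G := fun n => sp1 (Vc n) with hU
    have hVsucc : ∀ n, (Vc (n + 1)).1 ⊆ (Vc n).1 := fun n => hsp2 (Vc n)
    have hchain : ∀ m n, m ≤ n → (Vc n).1 ⊆ (Vc m).1 := by
      intro m n hmn
      induction n with
      | zero => simp_all
      | succ k ih =>
        rcases Nat.lt_or_ge m (k+1) with hlt | hge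
        · exact (hVsucc k).trans (ih (Nat.lt_succ_iff.mp hlt))
        · have : m = k + 1 := le_antisymm hmn hge
          subst this
          exact le_refl _
    have hdisj : ∀ m n, m ≠ n → Disjoint (U m).1 (U n).1 := by
      have key : ∀ m n, m < n → Disjoint (U m).1 (U n).1 := by
        intro m n hmn
        have h1 : (U n).1 ⊆ (Vc (m+1)).1 := (hsp1 (Vc n)).trans (hchain (m+1) n hmn)
        exact ((hspd (Vc m)).mono (le_refl _) h1)
      intro m n hmn
      rcases lt_or_gt_of_ne hmn with hlt | hlt
      · exact key m n hlt
      · exact (key n m hlt).symm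
    have hpt : ∀ n, ∃ p q : K, p ∈ (U n).1 ∧ q ∈ (U n).1 ∧ p ≠ q := by
      intro n
      obtain ⟨p, hp, q, hq, hpq⟩ := (U n).2.2.2
      exact ⟨p, q, hp, hq, hpq⟩
    choose x y hxm hym hxy using hpt
    have hfex : ∀ n, ∃ f : C(K, ℝ), Set.EqOn f 0 ((U n).1ᶜ ∪ {x n}) ∧ Set.EqOn f 1 {y n} ∧
        ∀ z, f z ∈ Set.Icc (0:ℝ) 1 := by
      intro n
      apply exists_continuous_zero_one_of_isClosed
        (((U n).2.1.isClosed_compl).union isClosed_singleton) isClosed_singleton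
      rw [Set.disjoint_singleton_right]
      rintro (hc | hc)
      · exact hc (hym n)
      · exact hxy n hc.symm
    choose f hf0 hf1 _hficc using hfex
    refine ⟨ℕ, x, y, f, (mk_denumerable ℕ).symm, ?_, ?_⟩
    · intro n
      exact ⟨hf0 n (Or.inr rfl), hf1 n rfl⟩
    · intro a b hab
      have hbx : x b ∈ (U a).1ᶜ := fun hc => (hdisj a b hab).le_bot ⟨hc, hxm b⟩
      have hby : y b ∈ (U a).1ᶜ := fun hc => (hdisj a b hab).le_bot ⟨hc, hym b⟩
      rw [hf0 a (Or.inl hbx), hf0 a (Or.inl hby)]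
      rfl


/-- Initial segments of `c.ord.ToType` have cardinality `< c`. -/
lemma card_initialSeg_lt {c : Cardinal} (i : c.ord.ToType) : #{j : c.ord.ToType // j < i} < c := by
  have := Cardinal.mk_Iio_ord_toType i
  exact this

/-- A one-sided ("semi-bidiscrete") transfinite sequence of length `μ⁺`. -/
lemma exists_semiseq [CompactSpace K] [T2Space K] {μ : Cardinal} (hμ : ℵ₀ ≤ μ)
    (hw : μ < weight K) :
    ∃ (x y : (Order.succ μ).ord.ToType → K) (f : (Order.succ μ).ord.ToType → C(K, ℝ)),
      (∀ i, f i (x i) = 0 ∧ f i (y i) = 1 ∧ ∀ z, f i z ∈ Set.Icc (0:ℝ) 1) ∧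
      (∀ i j, i < j → f i (x j) = f i (y j)) := by
  classical
  set O := (Order.succ μ).ord.ToType with hO
  have hseg : ∀ i : O, #{j : O // j < i} ≤ μ :=
    fun i => Order.lt_succ_iff.mp (card_initialSeg_lt i)
  have step : ∀ i : O, ∀ prior : {j : O // j < i} → K × K × C(K, ℝ),
      ∃ t : K × K × C(K, ℝ),
        (t.2.2 t.1 = 0 ∧ t.2.2 t.2.1 = 1 ∧ ∀ z, t.2.2 z ∈ Set.Icc (0:ℝ) 1) ∧
        ∀ j : {j : O // j < i}, (prior j).2.2 t.1 = (prior j).2.2 t.2.1 := by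
    intro i prior
    have hlt : max #{j : O // j < i} ℵ₀ < weight K :=
      lt_of_le_of_lt (max_le (hseg i) hμ) hw
    obtain ⟨u, v, huv, hsame⟩ := exists_unseparated (fun j => (prior j).2.2) hlt
    obtain ⟨f, hf0, hf1, hficc⟩ := exists_continuous_zero_one_of_isClosed
      (isClosed_singleton (x := u)) (isClosed_singleton (x := v))
      (by rwa [Set.disjoint_singleton])
    exact ⟨(u, v, f), ⟨hf0 rfl, hf1 rfl, hficc⟩, fun j => hsame j⟩
  have hwf : WellFounded ((· < ·) : O → O → Prop) := IsWellFounded.wf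
  set FStep : ∀ i : O, (∀ j : O, j < i → K × K × C(K, ℝ)) → K × K × C(K, ℝ) :=
    fun i prior => (step i (fun j => prior j.1 j.2)).choose with hFStep
  set F : O → K × K × C(K, ℝ) := hwf.fix FStep with hFdef
  have hspec : ∀ i : O,
      ((F i).2.2 (F i).1 = 0 ∧ (F i).2.2 (F i).2.1 = 1 ∧ ∀ z, (F i).2.2 z ∈ Set.Icc (0:ℝ) 1) ∧
      ∀ j : {j : O // j < i}, (F j.1).2.2 (F i).1 = (F j.1).2.2 (F i).2.1 := by
    intro i
    have heq : F i = FStep i (fun j _ => F j) := hwf.fix_eq FStep i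
    rw [heq]
    exact (step i (fun j : {j : O // j < i} => F j.1)).choose_spec
  refine ⟨fun i => (F i).1, fun i => (F i).2.1, fun i => (F i).2.2, ?_, ?_⟩
  · exact fun i => (hspec i).1
  · intro i j hij
    exact (hspec j).2 ⟨i, hij⟩


/-- Erdős–Rado: a symmetric coloring of a set of size at least `(2^l)⁺` with at most `l`
colors has a homogeneous set of size `l⁺`. -/
lemma card_initialSeg_lt' {P : Type} [LinearOrder P] [WellFoundedLT P] {c : Cardinal}
    (htype : Ordinal.type ((· < ·) : P → P → Prop) = c.ord) (i : P) :
    #{j : P // j < i} < c := by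
  have h1 : #{j : P // j < i} = (Ordinal.typein ((· < ·) : P → P → Prop) i).card :=
    (Ordinal.card_typein _).symm
  rw [h1, ← Cardinal.lt_ord, ← htype]
  exact Ordinal.typein_lt_type _ i

lemma erdos_rado_aux {l : Cardinal.{0}} (hl : ℵ₀ ≤ l) {T : Type} {C : Type}
    (hC : #C ≤ l) (hT : Order.succ ((2:Cardinal) ^ l) ≤ #T) (col : T → T → C)
    (hsym : ∀ a b, col a b = col b a) (P : Type) [LinearOrder P] [WellFoundedLT P]
    (htype : Ordinal.type ((· < ·) : P → P → Prop) = (Order.succ l).ord) :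
    ∃ (s : Set T) (c : C), Order.succ l ≤ #s ∧
      ∀ a ∈ s, ∀ b ∈ s, a ≠ b → col a b = c := by
  classical
  have h2l : ℵ₀ ≤ (2:Cardinal) ^ l := hl.trans (cantor l).le
  have hTne : Nonempty T := by
    rw [← Cardinal.mk_ne_zero_iff]
    intro h0
    rw [h0] at hT
    exact Cardinal.succ_ne_zero _ (le_antisymm hT zero_le)
  set wit : (S : Set T) → (↥S → C) → T := fun S τ =>
    if h : ∃ v : T, v ∉ S ∧ ∀ x : ↥S, col ↑x v = τ x then h.choose else Classical.arbitrary T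
    with hwit
  have wit_spec : ∀ (S : Set T) (τ : ↥S → C),
      (∃ v : T, v ∉ S ∧ ∀ x : ↥S, col ↑x v = τ x) →
      wit S τ ∉ S ∧ ∀ x : ↥S, col ↑x (wit S τ) = τ x := by
    intro S τ hex
    rw [hwit]
    dsimp only
    rw [dif_pos hex]
    exact hex.choose_spec
  set ext : Set T → Set T := fun B => B ∪ Set.range
    (fun p : Σ S : {S : Set T // S ⊆ B ∧ #S ≤ l}, (↥S.1 → C) => wit p.1.1 p.2) with hext
  have hext_sub : ∀ B, B ⊆ ext B := fun B => Set.subset_union_left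
  have hext_mem : ∀ (B S : Set T), S ⊆ B → #S ≤ l → ∀ τ : ↥S → C, wit S τ ∈ ext B := by
    intro B S hSB hSc τ
    exact Set.mem_union_right _ ⟨⟨⟨S, hSB, hSc⟩, τ⟩, rfl⟩
  have hl0 : l ≠ 0 := (aleph0_pos.trans_le hl).ne'
  have hext_card : ∀ B : Set T, #B ≤ 2 ^ l → #(ext B) ≤ 2 ^ l := by
    intro B hB
    have hidx : #{S : Set T // S ⊆ B ∧ #S ≤ l} ≤ 2 ^ l := by
      refine (mk_bounded_subset_le B l).trans ?_
      calc (max #B ℵ₀) ^ l ≤ ((2:Cardinal) ^ l) ^ l :=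
            power_le_power_right (max_le hB h2l)
        _ = (2:Cardinal) ^ (l * l) := power_mul.symm
        _ = (2:Cardinal) ^ l := by rw [mul_eq_self hl]
    have hfib : ∀ S : {S : Set T // S ⊆ B ∧ #S ≤ l}, #(↥S.1 → C) ≤ 2 ^ l := by
      intro S
      rw [← power_def]
      calc #C ^ #(↥S.1) ≤ l ^ #(↥S.1) := power_le_power_right hC
        _ ≤ l ^ l := power_le_power_left hl0 S.2.2
        _ = 2 ^ l := power_self_eq hl
    have hsig : #(Σ S : {S : Set T // S ⊆ B ∧ #S ≤ l}, (↥S.1 → C)) ≤ 2 ^ l := by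
      rw [mk_sigma]
      calc Cardinal.sum (fun S : {S : Set T // S ⊆ B ∧ #S ≤ l} => #(↥S.1 → C))
          ≤ Cardinal.sum (fun _ : {S : Set T // S ⊆ B ∧ #S ≤ l} => (2:Cardinal) ^ l) :=
            sum_le_sum _ _ hfib
        _ = #{S : Set T // S ⊆ B ∧ #S ≤ l} * 2 ^ l := sum_const' _ _
        _ ≤ 2 ^ l * 2 ^ l := mul_le_mul_left hidx _
        _ = 2 ^ l := mul_eq_self h2l
    calc #(ext B) ≤ #B + #(Σ S : {S : Set T // S ⊆ B ∧ #S ≤ l}, (↥S.1 → C)) :=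
          (mk_union_le _ _).trans (add_le_add_right mk_range_le _)
      _ ≤ 2 ^ l + 2 ^ l := add_le_add hB hsig
      _ = 2 ^ l := add_eq_self h2l
  have hwfP : WellFounded ((· < ·) : P → P → Prop) := IsWellFounded.wf
  set AStep : ∀ i : P, (∀ j : P, j < i → Set T) → Set T :=
    fun i prior => ext (⋃ j : {j : P // j < i}, prior j.1 j.2) with hAStep
  set Ach : P → Set T := hwfP.fix AStep with hAch
  have hAch_eq : ∀ i, Ach i = ext (⋃ j : {j : P // j < i}, Ach j.1) := fun i =>
    hwfP.fix_eq AStep i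
  have hseg : ∀ i : P, #{j : P // j < i} ≤ l := fun i =>
    Order.lt_succ_iff.mp (card_initialSeg_lt' htype i)
  have hAch_card : ∀ i, #(Ach i) ≤ 2 ^ l := by
    intro i
    refine hwfP.induction (C := fun i => #(Ach i) ≤ 2 ^ l) i ?_
    intro i IH
    rw [hAch_eq i]
    apply hext_card
    refine (mk_iUnion_le _).trans ?_
    have h1 : (⨆ j : {j : P // j < i}, #(Ach j.1)) ≤ 2 ^ l := by
      rcases isEmpty_or_nonempty {j : P // j < i} with he | hne
      · rw [ciSup_of_empty]
        exact zero_le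
      · exact ciSup_le' fun j => IH j.1 j.2
    calc #{j : P // j < i} * (⨆ j : {j : P // j < i}, #(Ach j.1)) ≤ l * (2 ^ l) :=
        mul_le_mul' (hseg i) h1
      _ ≤ 2 ^ l * 2 ^ l := mul_le_mul_left (cantor l).le _
      _ = 2 ^ l := mul_eq_self h2l
  set A : Set T := ⋃ i : P, Ach i with hA
  have hP_card : #P = Order.succ l := by
    rw [← Ordinal.card_type ((· < ·) : P → P → Prop), htype, card_ord]
  have hA_card : #A ≤ 2 ^ l := by
    refine (mk_iUnion_le _).trans ?_
    have h1 : (⨆ i : P, #(Ach i)) ≤ 2 ^ l := by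
      rcases isEmpty_or_nonempty P with he | hne
      · rw [ciSup_of_empty]
        exact zero_le
      · exact ciSup_le' fun i => hAch_card i
    calc #P * (⨆ i : P, #(Ach i)) ≤ Order.succ l * 2 ^ l := by
          rw [hP_card]; exact mul_le_mul_right h1 _
      _ ≤ 2 ^ l * 2 ^ l := mul_le_mul_left (Order.succ_le_of_lt (cantor l)) _
      _ = 2 ^ l := mul_eq_self h2l
  obtain ⟨u, hu⟩ : ∃ u : T, u ∉ A := by
    by_contra hcon
    push_neg at hcon
    have hAuniv : A = Set.univ := Set.eq_univ_iff_forall.mpr hcon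
    rw [hAuniv, mk_univ] at hA_card
    exact absurd (hT.trans hA_card) (by rw [Order.succ_le_iff]; exact lt_irrefl _)
  have hsat : ∀ S : Set T, S ⊆ A → #S ≤ l → ∀ τ : ↥S → C,
      wit S τ ∈ A := by
    intro S hSA hSc τ
    have hidxex : ∀ s : ↥S, ∃ i : P, (s : T) ∈ Ach i := fun s => Set.mem_iUnion.mp (hSA s.2)
    choose idx hidx using hidxex
    have hords : ∀ s : ↥S, Ordinal.typein (α := P) (· < ·) (idx s) < (Order.succ l).ord := by
      intro s
      have := Ordinal.typein_lt_type ((· < ·) : P → P → Prop) (idx s)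
      rwa [htype] at this
    have hsup : (⨆ s : ↥S, Ordinal.typein (α := P) (· < ·) (idx s)) < (Order.succ l).ord :=
      Cardinal.iSup_lt_ord_of_isRegular (isRegular_succ hl)
        (hSc.trans_lt (Order.lt_succ l)) hords
    have hsupsucc : Order.succ (⨆ s : ↥S, Ordinal.typein (α := P) (· < ·) (idx s)) <
        (Order.succ l).ord :=
      (Cardinal.isSuccLimit_ord (hl.trans (Order.le_succ l))).succ_lt hsup
    set i1 : P := Ordinal.enum (α := P) (· < ·)
      ⟨Order.succ (⨆ s : ↥S, Ordinal.typein (α := P) (· < ·) (idx s)),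
        Set.mem_Iio.mpr (by rw [htype]; exact hsupsucc)⟩ with hi1
    have hlt_i1 : ∀ s : ↥S, idx s < i1 := by
      intro s
      have h1 : Ordinal.typein (α := P) (· < ·) (idx s) < Ordinal.typein (α := P) (· < ·) i1 := by
        rw [hi1]; erw [Ordinal.typein_enum]
        exact lt_of_le_of_lt (Ordinal.le_iSup _ s) (Order.lt_succ _)
      exact (Ordinal.typein_lt_typein _).mp h1
    have hsub : S ⊆ ⋃ j : {j : P // j < i1}, Ach j.1 := by
      intro t ht
      exact Set.mem_iUnion.mpr ⟨⟨idx ⟨t, ht⟩, hlt_i1 ⟨t, ht⟩⟩, hidx ⟨t, ht⟩⟩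
    have hmem : wit S τ ∈ Ach i1 := by
      rw [hAch_eq i1]
      exact hext_mem _ S hsub hSc τ
    exact Set.mem_iUnion.mpr ⟨i1, hmem⟩
  set XStep : ∀ ξ : P, (∀ η : P, η < ξ → ↥A) → ↥A := fun ξ prior =>
    ⟨wit (Set.range (fun j : {j : P // j < ξ} => ((prior j.1 j.2 : ↥A) : T)))
        (fun s => col ↑s u),
      hsat _ (by rintro _ ⟨j, rfl⟩; exact (prior j.1 j.2).2) (mk_range_le.trans (hseg ξ)) _⟩
    with hXStep
  set X : P → ↥A := hwfP.fix XStep with hX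
  have hX_eq : ∀ ξ, X ξ = XStep ξ (fun η _ => X η) := fun ξ => hwfP.fix_eq XStep ξ
  have hX_spec : ∀ ξ : P,
      ((X ξ : T) ∉ Set.range (fun j : {j : P // j < ξ} => (X j.1 : T))) ∧
      ∀ η : P, η < ξ → col (X η : T) (X ξ : T) = col (X η : T) u := by
    intro ξ
    have hSA : Set.range (fun j : {j : P // j < ξ} => (X j.1 : T)) ⊆ A := by
      rintro _ ⟨j, rfl⟩; exact (X j.1).2
    have hex : ∃ v : T, v ∉ Set.range (fun j : {j : P // j < ξ} => (X j.1 : T)) ∧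
        ∀ x : ↥(Set.range (fun j : {j : P // j < ξ} => (X j.1 : T))),
          col ↑x v = col ↑x u :=
      ⟨u, fun huS => hu (hSA huS), fun x => rfl⟩
    have key : (X ξ : T) = wit (Set.range (fun j : {j : P // j < ξ} => (X j.1 : T)))
        (fun s => col ↑s u) := by
      rw [hX_eq ξ]
    obtain ⟨h1, h2⟩ := wit_spec _ _ hex
    rw [key]
    exact ⟨h1, fun η hη => h2 ⟨(X η : T), ⟨⟨η, hη⟩, rfl⟩⟩⟩
  have hX_inj : Function.Injective (fun ξ : P => (X ξ : T)) := by
    intro ξ η hxy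
    by_contra hne
    rcases lt_or_gt_of_ne hne with hlt | hlt
    · exact (hX_spec η).1 ⟨⟨ξ, hlt⟩, hxy⟩
    · exact (hX_spec ξ).1 ⟨⟨η, hlt⟩, hxy.symm⟩
  have hcof : #C < (Order.succ l).ord.cof := by
    rw [(isRegular_succ hl).cof_eq]
    exact hC.trans_lt (Order.lt_succ l)
  obtain ⟨c, hc⟩ := Cardinal.infinite_pigeonhole_card (fun ξ : P => col (X ξ : T) u)
    (Order.succ l) (le_of_eq hP_card.symm) (hl.trans (Order.le_succ l)) hcof
  refine ⟨(fun ξ : P => (X ξ : T)) '' ((fun ξ : P => col (X ξ : T) u) ⁻¹' {c}), c, ?_, ?_⟩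
  · rw [mk_image_eq hX_inj]
    exact hc
  · rintro a ⟨ξ, hξ, rfl⟩ b ⟨η, hη, rfl⟩ hab
    have hne : ξ ≠ η := fun hh => hab (by rw [hh])
    rcases lt_or_gt_of_ne hne with hlt | hlt
    · rw [(hX_spec η).2 ξ hlt]
      exact hξ
    · rw [hsym, (hX_spec ξ).2 η hlt]
      exact hη


/-- Erdős–Rado: a symmetric coloring of a set of size at least `(2^l)⁺` with at most `l`
colors has a homogeneous set of size `l⁺`. -/
lemma erdos_rado {l : Cardinal.{0}} (hl : ℵ₀ ≤ l) {T : Type} {C : Type}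
    (hC : #C ≤ l) (hT : Order.succ ((2:Cardinal) ^ l) ≤ #T) (col : T → T → C)
    (hsym : ∀ a b, col a b = col b a) :
    ∃ (s : Set T) (c : C), Order.succ l ≤ #s ∧
      ∀ a ∈ s, ∀ b ∈ s, a ≠ b → col a b = c :=
  erdos_rado_aux hl hC hT col hsym (Order.succ l).ord.ToType (Ordinal.type_toType _)


/-- Extraction of a genuine bidiscrete system from a homogeneous semi-sequence,
using successor differences along the homogeneous set. -/
lemma extraction {l : Cardinal.{0}} (hl : ℵ₀ ≤ l) {O : Type} [LinearOrder O] [WellFoundedLT O]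
    (H : Set O) (hH : Order.succ l ≤ #H)
    (x y : O → K) (g : O → C(K, ℝ)) (δ : ℝ)
    (hdiag : ∀ a ∈ H, g a (x a) = 0 ∧ g a (y a) = 1)
    (hlow : ∀ a ∈ H, ∀ b ∈ H, a < b → g b (x a) - g b (y a) = δ)
    (hup : ∀ a b : O, a < b → g a (x b) = g a (y b)) :
    ∃ c ∈ bdSet K, Order.succ l ≤ c := by
  classical
  have hwf : WellFounded ((· < ·) : O → O → Prop) := IsWellFounded.wf
  set up : O → Set O := fun a => {b : O | b ∈ H ∧ a < b} with hupdef
  set nxt : O → O := fun a => if h : (up a).Nonempty then hwf.min (up a) h else a with hnxt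
  have nxt_spec : ∀ a : O, (up a).Nonempty →
      nxt a ∈ H ∧ a < nxt a ∧ ∀ b ∈ H, a < b → nxt a ≤ b := by
    intro a h
    have h1 : nxt a ∈ up a := by
      rw [hnxt]; dsimp only; rw [dif_pos h]; exact hwf.min_mem _ h
    refine ⟨h1.1, h1.2, fun b hb hab => ?_⟩
    have h2 : ¬ b < nxt a := by
      rw [hnxt]; dsimp only; rw [dif_pos h]; exact hwf.not_lt_min _ (show b ∈ up a from ⟨hb, hab⟩)
    exact le_of_not_gt h2
  have nxt_inj : ∀ a b : O, a ∈ H → b ∈ H → (up a).Nonempty → (up b).Nonempty →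
      nxt a = nxt b → a = b := by
    intro a b haH hbH ha hb hab
    by_contra hne
    rcases lt_or_gt_of_ne hne with hlt | hlt
    · have h1 : nxt a ≤ b := (nxt_spec a ha).2.2 b hbH hlt
      have h2 : b < nxt b := (nxt_spec b hb).2.1
      rw [← hab] at h2
      exact absurd (h1.trans_lt h2) (lt_irrefl _)
    · have h1 : nxt b ≤ a := (nxt_spec b hb).2.2 a haH hlt
      have h2 : a < nxt a := (nxt_spec a ha).2.1
      rw [hab] at h2
      exact absurd (h1.trans_lt h2) (lt_irrefl _)
  set R : Set O := {t : O | ∃ a : O, a ∈ H ∧ (up a).Nonempty ∧ nxt a = t} with hR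
  set pred : O → O := fun t => if h : t ∈ R then h.choose else t with hpred
  have pred_spec : ∀ t ∈ R,
      pred t ∈ H ∧ (up (pred t)).Nonempty ∧ nxt (pred t) = t ∧ pred t < t := by
    intro t ht
    have heq : pred t = ht.choose := by rw [hpred]; dsimp only; rw [dif_pos ht]
    obtain ⟨h1, h2, h3⟩ := ht.choose_spec
    rw [heq]
    have h4 : Exists.choose ht < t := by
      have := (nxt_spec _ h2).2.1
      rwa [h3] at this
    exact ⟨h1, h2, h3, h4⟩
  set Φstep : ∀ t : O, (∀ s : O, s < t → O × ℕ) → O × ℕ := fun t prior =>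
    if h : t ∈ R then ((prior (pred t) (pred_spec t h).2.2.2).1,
      (prior (pred t) (pred_spec t h).2.2.2).2 + 1) else (t, 0) with hΦstep
  set φ : O → O × ℕ := hwf.fix Φstep with hφ
  have φ_eq : ∀ t, φ t = Φstep t (fun s _ => φ s) := fun t => hwf.fix_eq Φstep t
  have φ_R : ∀ t ∈ R, φ t = ((φ (pred t)).1, (φ (pred t)).2 + 1) := by
    intro t ht; rw [φ_eq t, hΦstep]; dsimp only; rw [dif_pos ht]
  have φ_nR : ∀ t, t ∉ R → φ t = (t, 0) := by
    intro t ht; rw [φ_eq t, hΦstep]; dsimp only; rw [dif_neg ht]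
  have φ_root : ∀ t : O, t ∈ H → (φ t).1 ∈ H ∧ (φ t).1 ∉ R := by
    intro t
    refine hwf.induction (C := fun t => t ∈ H → (φ t).1 ∈ H ∧ (φ t).1 ∉ R) t ?_
    intro t IH htH
    by_cases ht : t ∈ R
    · rw [φ_R t ht]
      exact IH (pred t) (pred_spec t ht).2.2.2 (pred_spec t ht).1
    · rw [φ_nR t ht]
      exact ⟨htH, ht⟩
  have φ_inj : ∀ n : ℕ, ∀ t s : O, t ∈ H → s ∈ H → φ t = φ s → (φ t).2 = n → t = s := by
    intro n
    induction n with
    | zero =>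
      intro t s htH hsH hts h0
      have ht : t ∉ R := by
        intro hR'
        rw [φ_R t hR'] at h0
        simp at h0
      have hs : s ∉ R := by
        intro hR'
        rw [hts, φ_R s hR'] at h0
        simp at h0
      rw [φ_nR t ht, φ_nR s hs] at hts
      exact (Prod.ext_iff.mp hts).1
    | succ n IHn =>
      intro t s htH hsH hts hn
      have ht : t ∈ R := by
        by_contra hR'
        rw [φ_nR t hR'] at hn
        simp at hn
      have hs : s ∈ R := by
        by_contra hR'
        rw [hts, φ_nR s hR'] at hn
        simp at hn
      have h1 : φ (pred t) = φ (pred s) := by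
        rw [φ_R t ht, φ_R s hs] at hts
        have e1 := (Prod.ext_iff.mp hts).1
        have e2 := (Prod.ext_iff.mp hts).2
        simp only at e1 e2
        exact Prod.ext_iff.mpr ⟨e1, by omega⟩
      have h2 : (φ (pred t)).2 = n := by
        rw [φ_R t ht] at hn
        simpa using hn
      have h3 : pred t = pred s :=
        IHn (pred t) (pred s) (pred_spec t ht).1 (pred_spec s hs).1 h1 h2
      rw [← (pred_spec t ht).2.2.1, ← (pred_spec s hs).2.2.1, h3]
  have hHle : #(↥H) ≤ #(↥(H \ R)) * ℵ₀ := by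
    have hinj : Function.Injective (fun t : ↥H =>
        ((⟨(φ ↑t).1, (φ_root ↑t t.2).1, (φ_root ↑t t.2).2⟩ : ↥(H \ R)), (φ ↑t).2)) := by
      intro t s hts
      have e1 : ((φ (↑t : O)).1 : O) = (φ (↑s : O)).1 := by
        have := congrArg (fun p : (↥(H \ R)) × ℕ => (p.1 : O)) hts
        simpa using this
      have e2 : (φ (↑t : O)).2 = (φ (↑s : O)).2 := by
        have := congrArg (fun p : (↥(H \ R)) × ℕ => p.2) hts
        simpa using this
      exact Subtype.ext (φ_inj (φ ↑t).2 ↑t ↑s t.2 s.2 (Prod.ext_iff.mpr ⟨e1, e2⟩) rfl)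
    calc #(↥H) ≤ #(↥(H \ R) × ℕ) := mk_le_of_injective hinj
      _ = #(↥(H \ R)) * ℵ₀ := by rw [mk_prod, mk_nat, lift_id, lift_aleph0]
  set I : Set O := {a : O | (a ∈ H ∧ a ∉ R) ∧ (up a).Nonempty} with hI
  have hsub : (H \ R) ⊆ I ∪ {a : O | a ∈ H ∧ ¬ (up a).Nonempty} := by
    intro a ha
    by_cases h : (up a).Nonempty
    · exact Or.inl ⟨⟨ha.1, ha.2⟩, h⟩
    · exact Or.inr ⟨ha.1, h⟩
  have hmax_sub : #(↥{a : O | a ∈ H ∧ ¬ (up a).Nonempty}) ≤ 1 := by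
    rw [Cardinal.mk_le_one_iff_set_subsingleton]
    intro a ha b hb
    by_contra hne
    rcases lt_or_gt_of_ne hne with hlt | hlt
    · exact ha.2 ⟨b, hb.1, hlt⟩
    · exact hb.2 ⟨a, ha.1, hlt⟩
  have hIcard : Order.succ l ≤ #(↥I) := by
    by_contra hcon
    push_neg at hcon
    have h1 : #(↥I) ≤ l := Order.lt_succ_iff.mp hcon
    have h2 : #(↥(H \ R)) ≤ #(↥I) + 1 := by
      calc #(↥(H \ R)) ≤ #(↥(I ∪ {a : O | a ∈ H ∧ ¬ (up a).Nonempty})) :=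
            mk_le_mk_of_subset hsub
        _ ≤ #(↥I) + #(↥{a : O | a ∈ H ∧ ¬ (up a).Nonempty}) := mk_union_le _ _
        _ ≤ #(↥I) + 1 := add_le_add_right hmax_sub _
    have h3 : #(↥H) ≤ (l + 1) * ℵ₀ :=
      hHle.trans (mul_le_mul_left (h2.trans (add_le_add_left h1 1)) _)
    rw [add_one_eq hl, mul_aleph0_eq hl] at h3
    exact absurd (hH.trans h3) (by rw [Order.succ_le_iff]; exact lt_irrefl _)
  have hIH : ∀ i : ↥I, (i : O) ∈ H := fun i => i.2.1.1
  have hInR : ∀ i : ↥I, (i : O) ∉ R := fun i => i.2.1.2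
  have hIup : ∀ i : ↥I, (up (i : O)).Nonempty := fun i => i.2.2
  set b : ↥I → O := fun i => nxt ↑i with hb
  have hbH : ∀ i, b i ∈ H := fun i => (nxt_spec _ (hIup i)).1
  have hib : ∀ i : ↥I, (i : O) < b i := fun i => (nxt_spec _ (hIup i)).2.1
  have hbR : ∀ i, b i ∈ R := fun i => ⟨↑i, hIH i, hIup i, rfl⟩
  set F : ↥I → C(K, ℝ) :=
    fun i => g (b i) - g ↑i + ContinuousMap.const K (g ↑i (x (b i))) with hF
  refine ⟨#(↥I), ⟨↥I, fun i => x (b i), fun i => y (b i), F, rfl, ?_, ?_⟩, hIcard⟩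
  · intro i
    have h1 := (hdiag (b i) (hbH i)).1
    have h2 := (hdiag (b i) (hbH i)).2
    have h3 := hup ↑i (b i) (hib i)
    constructor
    · simp only [hF, ContinuousMap.add_apply, ContinuousMap.sub_apply,
        ContinuousMap.const_apply]
      linarith
    · simp only [hF, ContinuousMap.add_apply, ContinuousMap.sub_apply,
        ContinuousMap.const_apply]
      linarith
  · intro i j hij
    have hbij : b j ≠ ↑i := fun hh => hInR i (hh ▸ hbR j)
    rcases lt_trichotomy (b j) ↑i with hlt | heq | hgt
    · have e1 := hlow (b j) (hbH j) ↑i (hIH i) hlt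
      have e2 := hlow (b j) (hbH j) (b i) (hbH i) (hlt.trans (hib i))
      simp only [hF, ContinuousMap.add_apply, ContinuousMap.sub_apply,
        ContinuousMap.const_apply]
      linarith
    · exact absurd heq hbij
    · have h1 : b i ≤ b j := (nxt_spec ↑i (hIup i)).2.2 (b j) (hbH j) hgt
      have h2 : b i ≠ b j := by
        intro hh
        exact hij (Subtype.ext (nxt_inj ↑i ↑j (hIH i) (hIH j) (hIup i) (hIup j) hh))
      have h3 : b i < b j := lt_of_le_of_ne h1 h2
      have e1 := hup ↑i (b j) hgt
      have e2 := hup (b i) (b j) h3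
      simp only [hF, ContinuousMap.add_apply, ContinuousMap.sub_apply,
        ContinuousMap.const_apply]
      linarith


/-- From threshold-homogeneous data, build a bidiscrete system via clamping. -/
lemma extraction_of_threshold {l : Cardinal.{0}} (hl : ℵ₀ ≤ l) {O : Type} [LinearOrder O]
    [WellFoundedLT O] (s : Set O) (hs : Order.succ l ≤ #s) (x y : O → K) (f : O → C(K, ℝ))
    (hdiag0 : ∀ i, f i (x i) = 0 ∧ f i (y i) = 1)
    (hone : ∀ i j : O, i < j → f i (x j) = f i (y j))
    {p q : ℝ} (hp0 : 0 ≤ p) (hpq : p < q) (hq1 : q ≤ 1) (δ0 : ℝ)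
    (hkey : ∀ a ∈ s, ∀ b ∈ s, a < b →
      (δ0 = -1 ∧ f b (x a) < p ∧ q < f b (y a)) ∨ (δ0 = 1 ∧ f b (y a) < p ∧ q < f b (x a))) :
    ∃ c ∈ bdSet K, Order.succ l ≤ c := by
  have hqp : (0:ℝ) < q - p := by linarith
  set θC : C(ℝ, ℝ) := ⟨fun t => min 1 (max 0 ((t - p) / (q - p))),
    continuous_const.min (continuous_const.max
      ((continuous_id.sub continuous_const).div_const _))⟩ with hθ
  have hθ0 : ∀ t : ℝ, t ≤ p → θC t = 0 := by
    intro t ht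
    simp only [hθ, ContinuousMap.coe_mk]
    have h1 : (t - p) / (q - p) ≤ 0 := by
      apply div_nonpos_of_nonpos_of_nonneg <;> linarith
    rw [max_eq_left h1, min_eq_right (by norm_num : (0:ℝ) ≤ 1)]
  have hθ1 : ∀ t : ℝ, q ≤ t → θC t = 1 := by
    intro t ht
    simp only [hθ, ContinuousMap.coe_mk]
    have h1 : (1:ℝ) ≤ (t - p) / (q - p) := (one_le_div hqp).mpr (by linarith)
    rw [max_eq_right (by linarith : (0:ℝ) ≤ (t - p) / (q - p)), min_eq_left h1]
  refine extraction hl s hs x y (fun o => θC.comp (f o)) δ0 ?_ ?_ ?_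
  · intro a _
    constructor
    · show θC (f a (x a)) = 0
      rw [(hdiag0 a).1]
      exact hθ0 0 hp0
    · show θC (f a (y a)) = 1
      rw [(hdiag0 a).2]
      exact hθ1 1 hq1
  · intro a ha b hb hab
    rcases hkey a ha b hb hab with ⟨hδ, h1, h2⟩ | ⟨hδ, h1, h2⟩
    · show θC (f b (x a)) - θC (f b (y a)) = δ0
      rw [hθ0 _ h1.le, hθ1 _ h2.le, hδ]
      ring
    · show θC (f b (x a)) - θC (f b (y a)) = δ0
      rw [hθ1 _ h2.le, hθ0 _ h1.le, hδ]
      ring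
  · intro a b hab
    show θC (f a (x b)) = θC (f a (y b))
    rw [hone a b hab]

/-- Main step: if `2^l < w(K)` then there is a bidiscrete system of size `l⁺`. -/
lemma succ_le_bd [CompactSpace K] [T2Space K] {l : Cardinal.{0}} (hl : ℵ₀ ≤ l)
    (hw : (2:Cardinal) ^ l < weight K) :
    ∃ c ∈ bdSet K, Order.succ l ≤ c := by
  classical
  have hμ : ℵ₀ ≤ (2:Cardinal) ^ l := hl.trans (cantor l).le
  obtain ⟨x, y, f, hprops, hone⟩ := exists_semiseq (K := K) hμ hw
  have hTcard : Order.succ ((2:Cardinal) ^ l) ≤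
      #((Order.succ ((2:Cardinal) ^ l)).ord.ToType) := by
    rw [Cardinal.mk_toType, card_ord]
  have hC : #(Option (ℚ × ℚ × Bool)) ≤ l := mk_le_aleph0.trans hl
  have pqex : ∀ u v : ℝ, u < v →
      ∃ r : ℚ × ℚ, u < (r.1 : ℝ) ∧ (r.1 : ℝ) < (r.2 : ℝ) ∧ (r.2 : ℝ) < v := by
    intro u v huv
    obtain ⟨p, hp1, hp2⟩ := exists_rat_btwn huv
    obtain ⟨q, hq1, hq2⟩ := exists_rat_btwn hp2
    exact ⟨(p, q), hp1, hq1, hq2⟩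
  set pq : ℝ → ℝ → ℚ × ℚ := fun u v => if h : u < v then (pqex u v h).choose else (0, 0)
    with hpqdef
  have pq_spec : ∀ u v : ℝ, u < v → u < ((pq u v).1 : ℝ) ∧
      ((pq u v).1 : ℝ) < ((pq u v).2 : ℝ) ∧ ((pq u v).2 : ℝ) < v := by
    intro u v h
    have heq : pq u v = (pqex u v h).choose := by rw [hpqdef]; dsimp only; rw [dif_pos h]
    rw [heq]
    exact (pqex u v h).choose_spec
  set ocol : (Order.succ ((2:Cardinal) ^ l)).ord.ToType →
      (Order.succ ((2:Cardinal) ^ l)).ord.ToType → Option (ℚ × ℚ × Bool) := fun a b =>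
    if f b (x a) < f b (y a) then
      some ((pq (f b (x a)) (f b (y a))).1, (pq (f b (x a)) (f b (y a))).2, true)
    else if f b (y a) < f b (x a) then
      some ((pq (f b (y a)) (f b (x a))).1, (pq (f b (y a)) (f b (x a))).2, false)
    else none with hocol
  set col : (Order.succ ((2:Cardinal) ^ l)).ord.ToType →
      (Order.succ ((2:Cardinal) ^ l)).ord.ToType → Option (ℚ × ℚ × Bool) := fun a b =>
    if a < b then ocol a b else ocol b a with hcol
  have hsym : ∀ a b, col a b = col b a := by
    intro a b
    rcases lt_trichotomy a b with h | h | h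
    · rw [hcol]; dsimp only; rw [if_pos h, if_neg (asymm h)]
    · subst h; rfl
    · rw [hcol]; dsimp only; rw [if_neg (asymm h), if_pos h]
  obtain ⟨s, c, hs_card, hhom⟩ := erdos_rado hl hC hTcard col hsym
  have hhom' : ∀ a ∈ s, ∀ b ∈ s, a < b → ocol a b = c := by
    intro a ha b hb hab
    have h0 := hhom a ha b hb (ne_of_lt hab)
    rw [hcol] at h0
    dsimp only at h0
    rwa [if_pos hab] at h0
  have hnt : ∃ a ∈ s, ∃ b ∈ s, a < b := by
    have h2 : (1 : Cardinal) < #(↥s) :=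
      lt_of_lt_of_le (lt_of_lt_of_le one_lt_aleph0 (hl.trans (Order.le_succ l))) hs_card
    rw [Cardinal.one_lt_iff_nontrivial] at h2
    obtain ⟨⟨a, ha⟩, ⟨b, hb⟩, hab⟩ := h2
    have hne : a ≠ b := fun hh => hab (Subtype.ext hh)
    rcases lt_or_gt_of_ne hne with h | h
    · exact ⟨a, ha, b, hb, h⟩
    · exact ⟨b, hb, a, ha, h⟩
  rcases c with _ | ⟨p, q, dir⟩
  · -- equality color : apply plain extraction with δ = 0
    refine extraction hl s hs_card x y f 0
      (fun a _ => ⟨(hprops a).1, (hprops a).2.1⟩) ?_ hone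
    intro a ha b hb hab
    have h0 := hhom' a ha b hb hab
    rw [hocol] at h0
    dsimp only at h0
    by_cases h : f b (x a) < f b (y a)
    · rw [if_pos h] at h0
      exact absurd h0 (by simp)
    · rw [if_neg h] at h0
      by_cases h' : f b (y a) < f b (x a)
      · rw [if_pos h'] at h0
        exact absurd h0 (by simp)
      · have heq := le_antisymm (not_lt.mp h') (not_lt.mp h)
        linarith
  · -- inequality color
    have hfact : ∀ a ∈ s, ∀ b ∈ s, a < b →
        (dir = true ∧ f b (x a) < (p:ℝ) ∧ (p:ℝ) < (q:ℝ) ∧ (q:ℝ) < f b (y a)) ∨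
        (dir = false ∧ f b (y a) < (p:ℝ) ∧ (p:ℝ) < (q:ℝ) ∧ (q:ℝ) < f b (x a)) := by
      intro a ha b hb hab
      have h0 := hhom' a ha b hb hab
      rw [hocol] at h0
      dsimp only at h0
      by_cases h : f b (x a) < f b (y a)
      · rw [if_pos h] at h0
        rw [Option.some.injEq, Prod.mk.injEq, Prod.mk.injEq] at h0
        obtain ⟨e1, e2, e3⟩ := h0
        obtain ⟨f1, f2, f3⟩ := pq_spec _ _ h
        left
        rw [← e1, ← e2, ← e3]
        exact ⟨rfl, f1, f2, f3⟩
      · rw [if_neg h] at h0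
        by_cases h' : f b (y a) < f b (x a)
        · rw [if_pos h'] at h0
          rw [Option.some.injEq, Prod.mk.injEq, Prod.mk.injEq] at h0
          obtain ⟨e1, e2, e3⟩ := h0
          obtain ⟨f1, f2, f3⟩ := pq_spec _ _ h'
          right
          rw [← e1, ← e2, ← e3]
          exact ⟨rfl, f1, f2, f3⟩
        · rw [if_neg h'] at h0
          exact absurd h0 (by simp)
    obtain ⟨a0, ha0, b0, hb0, hab0⟩ := hnt
    have hicc := (hprops b0).2.2
    cases dir with
    | true =>
      obtain ⟨_, k1, k2, k3⟩ | ⟨hfalse, _⟩ := hfact a0 ha0 b0 hb0 hab0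
      · have hp0 : (0:ℝ) ≤ (p:ℝ) := le_of_lt (lt_of_le_of_lt (hicc (x a0)).1 k1)
        have hq1 : (q:ℝ) ≤ 1 := le_of_lt (lt_of_lt_of_le k3 (hicc (y a0)).2)
        refine extraction_of_threshold hl s hs_card x y f
          (fun i => ⟨(hprops i).1, (hprops i).2.1⟩) hone hp0 k2 hq1 (-1) ?_
        intro a ha b hb hab
        obtain ⟨_, m1, m2, m3⟩ | ⟨hfalse, _⟩ := hfact a ha b hb hab
        · exact Or.inl ⟨rfl, m1, m3⟩
        · exact absurd hfalse (by simp)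
      · exact absurd hfalse (by simp)
    | false =>
      obtain ⟨htrue, _⟩ | ⟨_, k1, k2, k3⟩ := hfact a0 ha0 b0 hb0 hab0
      · exact absurd htrue (by simp)
      · have hp0 : (0:ℝ) ≤ (p:ℝ) := le_of_lt (lt_of_le_of_lt (hicc (y a0)).1 k1)
        have hq1 : (q:ℝ) ≤ 1 := le_of_lt (lt_of_lt_of_le k3 (hicc (x a0)).2)
        refine extraction_of_threshold hl s hs_card x y f
          (fun i => ⟨(hprops i).1, (hprops i).2.1⟩) hone hp0 k2 hq1 1 ?_
        intro a ha b hb hab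
        obtain ⟨htrue, _⟩ | ⟨_, m1, m2, m3⟩ := hfact a ha b hb hab
        · exact absurd htrue (by simp)
        · exact Or.inr ⟨rfl, m1, m3⟩


/-- A bidiscrete system injects into pairs of basis elements. -/
lemma bd_le_weight [CompactSpace K] [T2Space K] (hw_inf : ℵ₀ ≤ weight K) :
    bd K ≤ weight K := by
  apply bd_le_of_forall
  rintro d ⟨ι, x, y, f, rfl, h1, h2⟩
  obtain ⟨B, hB, hBcard⟩ := exists_basis_weight K
  have key : ∀ α : ι, ∃ UV : Set K × Set K, UV.1 ∈ B ∧ UV.2 ∈ B ∧ x α ∈ UV.1 ∧ y α ∈ UV.2 ∧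
      UV.1 ⊆ (f α) ⁻¹' (Set.Iio (1/2 : ℝ)) ∧ UV.2 ⊆ (f α) ⁻¹' (Set.Ioi (1/2 : ℝ)) := by
    intro α
    have hU : x α ∈ (f α) ⁻¹' (Set.Iio (1/2 : ℝ)) := by
      simp only [Set.mem_preimage, Set.mem_Iio, (h1 α).1]
      norm_num
    have hV : y α ∈ (f α) ⁻¹' (Set.Ioi (1/2 : ℝ)) := by
      simp only [Set.mem_preimage, Set.mem_Ioi, (h1 α).2]
      norm_num
    obtain ⟨U, hUB, hxU, hUsub⟩ :=
      hB.exists_subset_of_mem_open hU (isOpen_Iio.preimage (f α).continuous)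
    obtain ⟨V, hVB, hyV, hVsub⟩ :=
      hB.exists_subset_of_mem_open hV (isOpen_Ioi.preimage (f α).continuous)
    exact ⟨(U, V), hUB, hVB, hxU, hyV, hUsub, hVsub⟩
  choose UV hU hV hx hy hUsub hVsub using key
  have hinj : Function.Injective
      (fun α => ((⟨(UV α).1, hU α⟩ : ↥B), (⟨(UV α).2, hV α⟩ : ↥B))) := by
    intro α β hab
    by_contra hne
    rw [Prod.ext_iff] at hab
    have e1 : (UV α).1 = (UV β).1 := congrArg Subtype.val hab.1
    have e2 : (UV α).2 = (UV β).2 := congrArg Subtype.val hab.2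
    have hxm : x β ∈ (UV α).1 := e1 ▸ hx β
    have hym : y β ∈ (UV α).2 := e2 ▸ hy β
    have c1 : f α (x β) < 1/2 := hUsub α hxm
    have c2 : 1/2 < f α (y β) := hVsub α hym
    rw [h2 α β hne] at c1
    linarith
  calc #ι ≤ #(↥B × ↥B) := mk_le_of_injective hinj
    _ = #(↥B) * #(↥B) := by simp [mk_prod]
    _ = weight K * weight K := by rw [← hBcard]
    _ = weight K := mul_eq_self hw_inf

end BdProof

/-- If `K` is a compact Hausdorff space whose weight is a strong limit cardinal
(`2^λ < w(K)` for every `λ < w(K)`), then `w(K) = bd(K)`. -/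
theorem weight_eq_bd_of_strong_limit (K : Type) [TopologicalSpace K]
    [CompactSpace K] [T2Space K]
    (h : ∀ c : Cardinal, c < weight K → (2 : Cardinal) ^ c < weight K) :
    weight K = bd K := by
  classical
  rcases isEmpty_or_nonempty K with hemp | hne
  · -- K empty: both sides are zero
    have hw0 : weight K = 0 := by
      have hbasis : TopologicalSpace.IsTopologicalBasis (∅ : Set (Set K)) := by
        apply TopologicalSpace.isTopologicalBasis_of_isOpen_of_nhds
        · intro u hu
          exact absurd hu (Set.notMem_empty u)
        · intro a
          exact isEmptyElim a
      have h1 := BdProof.weight_le_basis hbasis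
      simpa using h1
    have hbd0 : bd K ≤ 0 := by
      apply BdProof.bd_le_of_forall
      rintro d ⟨ι, x, y, f, rfl, -, -⟩
      haveI : IsEmpty ι := ⟨fun i => hemp.false (x i)⟩
      exact le_of_eq (Cardinal.mk_eq_zero ι)
    rw [hw0]
    exact (le_antisymm hbd0 zero_le).symm
  · -- K nonempty
    have hw_ne : weight K ≠ 0 := by
      intro h0
      obtain ⟨B, hB, hBcard⟩ := BdProof.exists_basis_weight K
      rw [h0] at hBcard
      haveI : IsEmpty ↥B := Cardinal.mk_eq_zero_iff.mp hBcard.symm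
      have hBempty : B = ∅ := Set.isEmpty_coe_sort.mp inferInstance
      have hUniv := hB.sUnion_eq
      rw [hBempty, Set.sUnion_empty] at hUniv
      obtain ⟨a⟩ := hne
      exact Set.notMem_empty a (hUniv.ge (Set.mem_univ a))
    have hw_inf : ℵ₀ ≤ weight K := by
      by_contra hcon
      push_neg at hcon
      obtain ⟨n, hn⟩ := Cardinal.lt_aleph0.mp hcon
      have hn1 : 1 ≤ n := by
        rcases Nat.eq_zero_or_pos n with h0 | hpos
        · rw [h0] at hn
          exact absurd (by exact_mod_cast hn) hw_ne
        · exact hpos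
      have hlt : ((n - 1 : ℕ) : Cardinal) < weight K := by
        rw [hn]
        exact_mod_cast Nat.sub_lt hn1 one_pos
      have h2 := h _ hlt
      rw [hn] at h2
      have hnat : 2 ^ (n - 1) < n := by exact_mod_cast h2
      have hpow := Nat.lt_two_pow_self (n := n - 1)
      omega
    have hKinf : Infinite K := by
      by_contra hfin
      rw [not_infinite_iff_finite] at hfin
      have h1 := BdProof.weight_le_basis (TopologicalSpace.isTopologicalBasis_opens (α := K))
      have h2 : #{U : Set K | IsOpen U} ≤ #(Set K) := by
        calc #{U : Set K | IsOpen U} ≤ #(↥(Set.univ : Set (Set K))) :=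
              Cardinal.mk_le_mk_of_subset (Set.subset_univ _)
          _ = #(Set K) := mk_univ
      have h3 : #(Set K) < ℵ₀ := mk_lt_aleph0_iff.mpr inferInstance
      exact absurd (hw_inf.trans (h1.trans h2)) (not_le.mpr h3)
    have hbdle : bd K ≤ weight K := BdProof.bd_le_weight hw_inf
    have hbd_inf : ℵ₀ ≤ bd K := BdProof.le_bd_of_mem BdProof.aleph0_mem_bdSet
    have hwle : weight K ≤ bd K := by
      by_contra hcon
      push_neg at hcon
      have h2 := h (bd K) hcon
      obtain ⟨c, hc_mem, hc_ge⟩ := BdProof.succ_le_bd (K := K) hbd_inf h2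
      have h3 : Order.succ (bd K) ≤ bd K := hc_ge.trans (BdProof.le_bd_of_mem hc_mem)
      exact absurd h3 (by rw [Order.succ_le_iff]; exact lt_irrefl _)
    exact le_antisymm hwle hbdle
end
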